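/- arXiv:1410.6734 — 8 statements merged into one kernel-verified Lean document; each statement's English description precedes it below -/
import Mathlib

section
/- Let e ∈ ℝ^n with ‖e‖ = √n, and let 0 < α < √n. Define the circular cone K_e(α) := {x ∈ ℝ^n : eᵀx ≥ α‖x‖}. Then the dual cone of K_e(α) with respect to the standard inner product equals K_e(√(n − α²)), i.e., {s : xᵀs ≥ 0 for all x ∈ K_e(α)} = {s : eᵀs ≥ √(n − α²)·‖s‖}. -/
open RealInnerProductSpace

private lemma aux_decomp {E : Type*} [NormedAddCommGroup E] [InnerProductSpace ℝ E]
    (e x s : E) (N : ℝ) (hN : ⟪e, e⟫ = N) (hN0 : N ≠ 0) :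
    ⟪x, s⟫ = ⟪e, x⟫*⟪e, s⟫/N
      + ⟪x - (⟪e, x⟫/N)•e, s - (⟪e, s⟫/N)•e⟫ := by
  simp only [inner_sub_left, inner_sub_right, real_inner_smul_left, real_inner_smul_right, hN,
    real_inner_comm e x]
  field_simp
  ring

private lemma aux_norm {E : Type*} [NormedAddCommGroup E] [InnerProductSpace ℝ E]
    (e x : E) (N : ℝ) (hN : ⟪e, e⟫ = N) (hN0 : N ≠ 0) :
    ‖x - (⟪e, x⟫/N)•e‖^2 = ‖x‖^2 - ⟪e, x⟫^2/N := by
  have h := aux_decomp e x x N hN hN0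
  rw [real_inner_self_eq_norm_sq, real_inner_self_eq_norm_sq] at h
  rw [h]; ring

private lemma aux_orth {E : Type*} [NormedAddCommGroup E] [InnerProductSpace ℝ E]
    (e x : E) (N : ℝ) (hN : ⟪e, e⟫ = N) (hN0 : N ≠ 0) :
    ⟪e, x - (⟪e, x⟫/N)•e⟫ = 0 := by
  simp [inner_sub_right, real_inner_smul_right, hN]
  field_simp
  rw [← hN, real_inner_self_eq_norm_sq]; ring

private lemma sq_le_imp {a b : ℝ} (ha : 0 ≤ a) (hb : 0 ≤ b) (h : a^2 ≤ b^2) : a ≤ b := by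
  nlinarith

private lemma arith1 {α sN N : ℝ} (h0 : 0 < α) (h1 : α < sN) (h2 : sN^2 = N) : α^2 < N := by
  nlinarith

private lemma arith2 {β sN N c t : ℝ} (hβ : 0 ≤ β) (ht : 0 ≤ t) (hβs : β ≤ sN)
    (hsn : sN^2 = N) (h : N*t^2 = c^2) : (β*t)^2 ≤ c^2 := by
  nlinarith [sq_nonneg t, mul_le_mul hβs hβs hβ (le_trans hβ hβs)]

private lemma arith3 {α β sN N c r t : ℝ} (hα : 0 < α) (hβ : 0 < β) (hsN : 0 < sN)
    (hsN2 : sN^2 = N) (hβ2 : β^2 = N - α^2) (hr : 0 < r) (ht : 0 ≤ t)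
    (hkey : sN*(β*r) ≤ α*c) (hnorm : N*r^2 = N*t^2 - c^2) : β*t ≤ c := by
  have hN_pos : 0 < N := by nlinarith
  have hc0 : 0 < c := by nlinarith [mul_pos hsN (mul_pos hβ hr)]
  have h4 : 0 ≤ sN*(β*r) := by positivity
  have hsq1 : (sN*(β*r))^2 ≤ (α*c)^2 := by nlinarith
  have hsq1N : N*(β*r)^2 ≤ (α*c)^2 := by nlinarith [hsq1]
  have hfinN : N*((β*t)^2) ≤ N*(c^2) := by nlinarith [hsq1N]
  have hfin : (β*t)^2 ≤ c^2 := (mul_le_mul_iff_right₀ hN_pos).mp hfinN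
  exact sq_le_imp (mul_nonneg hβ.le ht) hc0.le hfin

private lemma arith4 {α β N a c nx ns nxp nsp : ℝ} (hα : 0 < α) (hβ : 0 < β) (hN : 0 < N)
    (hβ2 : β^2 = N - α^2) (hnx : 0 ≤ nx) (hns : 0 ≤ ns) (hnxp : 0 ≤ nxp) (hnsp : 0 ≤ nsp)
    (hx : α*nx ≤ a) (hs : β*ns ≤ c)
    (hxp : N*nxp^2 = N*nx^2 - a^2) (hsp : N*nsp^2 = N*ns^2 - c^2) :
    N*(nxp*nsp) ≤ a*c := by
  have ha0 : 0 ≤ a := le_trans (mul_nonneg hα.le hnx) hx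
  have hc0 : 0 ≤ c := le_trans (mul_nonneg hβ.le hns) hs
  have hxx : α*nx*(α*nx) ≤ a*a := mul_le_mul hx hx (mul_nonneg hα.le hnx) ha0
  have hss : β*ns*(β*ns) ≤ c*c := mul_le_mul hs hs (mul_nonneg hβ.le hns) hc0
  have hE1 : N*nxp^2 ≤ β^2*nx^2 := by nlinarith [hxp, hxx]
  have hE2 : N*nsp^2 ≤ α^2*ns^2 := by nlinarith [hsp, hss]
  have hE1' : 0 ≤ N*nxp^2 := by positivity
  have hE2' : 0 ≤ N*nsp^2 := by positivity
  have hprod : (N*nxp^2)*(N*nsp^2) ≤ (β^2*nx^2)*(α^2*ns^2) :=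
    mul_le_mul hE1 hE2 hE2' (le_trans hE1' hE1)
  have hac : α*nx*(β*ns) ≤ a*c := mul_le_mul hx hs (mul_nonneg hβ.le hns) ha0
  have hac2 : (α*nx*(β*ns))*(α*nx*(β*ns)) ≤ (a*c)*(a*c) :=
    mul_le_mul hac hac (by positivity) (mul_nonneg ha0 hc0)
  have hsq : (N*(nxp*nsp))^2 ≤ (a*c)^2 := by nlinarith [hprod, hac2]
  exact sq_le_imp (by positivity) (mul_nonneg ha0 hc0) hsq

set_option maxHeartbeats 1000000 in
theorem stmt_1 (n : ℕ) (e : EuclideanSpace ℝ (Fin n))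
    (he : ‖e‖ = Real.sqrt n) (α : ℝ) (hα0 : 0 < α) (hαn : α < Real.sqrt n) :
    {s : EuclideanSpace ℝ (Fin n) |
        ∀ x ∈ {x : EuclideanSpace ℝ (Fin n) | (inner ℝ e x : ℝ) ≥ α * ‖x‖},
          (inner ℝ x s : ℝ) ≥ 0} =
      {s : EuclideanSpace ℝ (Fin n) |
        (inner ℝ e s : ℝ) ≥ Real.sqrt ((n : ℝ) - α ^ 2) * ‖s‖} := by
  set N : ℝ := (n : ℝ) with hNdef
  have hsN_pos : 0 < Real.sqrt N := lt_trans hα0 hαn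
  have hN_pos : 0 < N := Real.sqrt_pos.mp hsN_pos
  have hN0 : N ≠ 0 := ne_of_gt hN_pos
  have hN : ⟪e, e⟫ = N := by
    rw [real_inner_self_eq_norm_sq, he, Real.sq_sqrt (Nat.cast_nonneg n)]
  set sN : ℝ := Real.sqrt N with hsNdef
  have hsN2 : sN^2 = N := Real.sq_sqrt (le_of_lt hN_pos)
  have hα2 : α^2 < N := arith1 hα0 hαn hsN2
  set β : ℝ := Real.sqrt (N - α^2) with hβdef
  have hβ2 : β^2 = N - α^2 := Real.sq_sqrt (by linarith)
  have hβ_pos : 0 < β := Real.sqrt_pos.mpr (by linarith)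
  ext s
  simp only [Set.mem_setOf_eq]
  constructor
  · -- dual cone ⊆ circular cone with β
    intro hs
    set c : ℝ := (inner ℝ e s : ℝ) with hcdef
    set sp : EuclideanSpace ℝ (Fin n) := s - (c/N)•e with hspdef
    have hsp_norm : ‖sp‖^2 = ‖s‖^2 - c^2/N := aux_norm e s N hN hN0
    have hesp : ⟪e, sp⟫ = 0 := aux_orth e s N hN hN0
    have hsps : ⟪sp, s⟫ = ‖sp‖^2 := by
      have hs_eq : s = sp + (c/N)•e := by rw [hspdef]; abel
      have h1 : ⟪sp, s⟫ = ⟪sp, sp⟫ + (c/N) * ⟪sp, e⟫ := by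
        nth_rewrite 1 [hs_eq]
        rw [inner_add_right, real_inner_smul_right]
      rw [h1, real_inner_self_eq_norm_sq, real_inner_comm, hesp]
      ring
    by_cases hsp0 : sp = 0
    · -- s is a multiple of e
      have hspn0 : ‖sp‖ = 0 := by rw [hsp0]; simp
      have h0 : ‖s‖^2 - c^2/N = 0 := by rw [← hsp_norm, hspn0]; ring
      have hnormN : N * ‖s‖^2 = c^2 := by field_simp at h0; linarith
      have hc0 : 0 ≤ c := by
        have he_mem : (inner ℝ e e : ℝ) ≥ α * ‖e‖ := by
          rw [hN, he]
          have h1 : α*sN ≤ sN*sN := mul_le_mul_of_nonneg_right hαn.le hsN_pos.le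
          have h2 : sN*sN = N := by rw [← hsN2]; ring
          linarith
        exact hs e he_mem
      have hβleN : β ≤ sN := by
        rw [hβdef, hsNdef]
        exact Real.sqrt_le_sqrt (by linarith [sq_nonneg α])
      have hsq : (β*‖s‖)^2 ≤ c^2 :=
        arith2 hβ_pos.le (norm_nonneg s) hβleN hsN2 hnormN
      exact sq_le_imp (mul_nonneg hβ_pos.le (norm_nonneg s)) hc0 hsq
    · -- s has a nonzero orthogonal component
      have hr_pos : 0 < ‖sp‖ := norm_pos_iff.mpr hsp0
      set r : ℝ := ‖sp‖ with hrdef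
      set x : EuclideanSpace ℝ (Fin n) := (α/sN)•e - (β/r)•sp with hxdef
      have hex : ⟪e, x⟫ = α * sN := by
        have h0 : ⟪e, x⟫ = α/sN * N := by
          rw [hxdef, inner_sub_right, real_inner_smul_right, real_inner_smul_right, hN, hesp]
          ring
        rw [h0, ← hsN2, sq, ← mul_assoc, div_mul_cancel₀ _ (ne_of_gt hsN_pos)]
      have hx_norm : ‖x‖^2 = N := by
        have h1 : ⟪x, x⟫ = (α/sN)^2 * N + (β/r)^2 * r^2 := by
          rw [hxdef]
          have hspe : ⟪sp, e⟫ = 0 := by rw [real_inner_comm]; exact hesp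
          simp only [inner_sub_left, inner_sub_right, real_inner_smul_left,
            real_inner_smul_right, hN, hesp, hspe]
          rw [real_inner_self_eq_norm_sq, ← hrdef]
          ring
        rw [real_inner_self_eq_norm_sq] at h1
        rw [h1, div_pow, div_pow, ← hsN2,
          div_mul_cancel₀ _ (pow_ne_zero 2 (ne_of_gt hsN_pos)),
          div_mul_cancel₀ _ (pow_ne_zero 2 (ne_of_gt hr_pos))]
        linear_combination hβ2 - hsN2
      have hx_norm' : ‖x‖ = sN := by
        rw [hsNdef, ← hx_norm]
        exact (Real.sqrt_sq (norm_nonneg x)).symm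
      have hx_mem : (inner ℝ e x : ℝ) ≥ α * ‖x‖ := by
        rw [hx_norm']
        exact le_of_eq hex.symm
      have hxs := hs x hx_mem
      have hxs' : (α/sN) * c - (β/r) * r^2 ≥ 0 := by
        have h2 : (inner ℝ x s : ℝ) = (α/sN) * c - (β/r) * r^2 := by
          rw [hxdef, inner_sub_left, real_inner_smul_left, real_inner_smul_left, hsps]
        rwa [h2] at hxs
      have hbr : (β/r) * r^2 = β * r := by
        rw [sq, ← mul_assoc, div_mul_cancel₀ _ (ne_of_gt hr_pos)]
      have key : sN * (β * r) ≤ α * c := by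
        have h2 : β*r ≤ (α/sN)*c := by rw [hbr] at hxs'; linarith
        calc sN*(β*r) ≤ sN*((α/sN)*c) := mul_le_mul_of_nonneg_left h2 hsN_pos.le
          _ = (α*c/sN)*sN := by ring
          _ = α*c := div_mul_cancel₀ _ (ne_of_gt hsN_pos)
      have hnormN : N*r^2 = N*‖s‖^2 - c^2 := by
        have h0' := hsp_norm
        field_simp at h0'
        linarith
      exact arith3 hα0 hβ_pos hsN_pos hsN2 hβ2 hr_pos (norm_nonneg s) key hnormN
  · -- circular cone with β ⊆ dual cone
    intro hs x hx
    set a : ℝ := (inner ℝ e x : ℝ) with hadef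
    set c : ℝ := (inner ℝ e s : ℝ) with hcdef
    have hxp_norm : ‖x - (a/N)•e‖^2 = ‖x‖^2 - a^2/N := aux_norm e x N hN hN0
    have hsp_norm : ‖s - (c/N)•e‖^2 = ‖s‖^2 - c^2/N := aux_norm e s N hN hN0
    have hdecomp := aux_decomp e x s N hN hN0
    set xp : EuclideanSpace ℝ (Fin n) := x - (a/N)•e with hxpdef
    set sp : EuclideanSpace ℝ (Fin n) := s - (c/N)•e with hspdef
    have hCS : -(‖xp‖ * ‖sp‖) ≤ ⟪xp, sp⟫ := neg_le_of_abs_le (abs_real_inner_le_norm xp sp)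
    have hxpN : N*‖xp‖^2 = N*‖x‖^2 - a^2 := by
      have h0' := hxp_norm; field_simp at h0'; linarith
    have hspN : N*‖sp‖^2 = N*‖s‖^2 - c^2 := by
      have h0' := hsp_norm; field_simp at h0'; linarith
    have hfin : N*(‖xp‖*‖sp‖) ≤ a*c :=
      arith4 hα0 hβ_pos hN_pos hβ2 (norm_nonneg x) (norm_nonneg s)
        (norm_nonneg xp) (norm_nonneg sp) hx hs hxpN hspN
    have ha0 : 0 ≤ a := le_trans (mul_nonneg hα0.le (norm_nonneg x)) hx
    have hc0 : 0 ≤ c := le_trans (mul_nonneg hβ_pos.le (norm_nonneg s)) hs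
    have h8 : ‖xp‖*‖sp‖ ≤ a*c/N := by rw [le_div_iff₀ hN_pos]; linarith
    have h9 : (inner ℝ x s : ℝ) = a*c/N + ⟪xp, sp⟫ := hdecomp
    linarith [hCS, h8, h9.ge, h9.le]
end

section
/- Let 0 < α < √n, let e ∈ ℝ^n with ‖e‖ = √n, let L ⊆ ℝ^n be a subspace, and let x̄ ≠ 0 be a point with x̄ − e ∈ L and eᵀx̄ = α‖x̄‖. Let T := {v ∈ L : eᵀv = (α/‖x̄‖)·x̄ᵀv} and let θ be the angle between x̄ and its orthogonal projection onto T. Then the orthogonal projection of e onto L^⊥ satisfies ‖P_{L^⊥}(e)‖² = (n − α²)·‖x̄‖²·sin²θ / (n − α² + (‖x̄‖ − α)²·sin²θ). -/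
set_option maxHeartbeats 1000000 in
open Classical in
theorem stmt_3 (n : ℕ) (e xbar : EuclideanSpace ℝ (Fin n))
    (he : ‖e‖ = Real.sqrt n) (α : ℝ) (hα0 : 0 < α) (hαn : α < Real.sqrt n)
    (L : Submodule ℝ (EuclideanSpace ℝ (Fin n)))
    (hx : xbar ≠ 0) (hxL : xbar - e ∈ L)
    (hxbdry : (inner ℝ e xbar : ℝ) = α * ‖xbar‖)
    (T : Submodule ℝ (EuclideanSpace ℝ (Fin n)))
    (hT : T = L ⊓ LinearMap.ker
      ((innerSL ℝ e : EuclideanSpace ℝ (Fin n) →L[ℝ] ℝ) -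
        (α / ‖xbar‖) • (innerSL ℝ xbar : EuclideanSpace ℝ (Fin n) →L[ℝ] ℝ)).toLinearMap)
    (u : EuclideanSpace ℝ (Fin n)) (hu : u = (T.orthogonalProjectionOnto xbar : EuclideanSpace ℝ (Fin n)))
    (sin2 : ℝ)
    (hsin2 : sin2 = if u = 0 then 1 else
      1 - ((inner ℝ xbar u : ℝ)) ^ 2 / (‖xbar‖ ^ 2 * ‖u‖ ^ 2)) :
    ‖(Lᗮ.orthogonalProjectionOnto e : EuclideanSpace ℝ (Fin n))‖ ^ 2 =
      ((n : ℝ) - α ^ 2) * ‖xbar‖ ^ 2 * sin2 /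
        ((n : ℝ) - α ^ 2 + (‖xbar‖ - α) ^ 2 * sin2) := by
  have hR : (0:ℝ) < ‖xbar‖ := norm_pos_iff.mpr hx
  set R : ℝ := ‖xbar‖ with hRdef
  have hn0 : (0:ℝ) ≤ (n:ℝ) := Nat.cast_nonneg n
  have he2 : ‖e‖ ^ 2 = (n:ℝ) := by rw [he, Real.sq_sqrt hn0]
  have hN : (0:ℝ) < (n:ℝ) - α ^ 2 := by
    have h1 : α ^ 2 < Real.sqrt (n:ℝ) ^ 2 := by nlinarith [Real.sqrt_nonneg ((n:ℝ))]
    rw [Real.sq_sqrt hn0] at h1; linarith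
  set q : EuclideanSpace ℝ (Fin n) := (Lᗮ.orthogonalProjectionOnto e : EuclideanSpace ℝ (Fin n)) with hqdef
  have hqmem : q ∈ Lᗮ := by rw [hqdef]; exact (Lᗮ.orthogonalProjectionOnto e).2
  have hxq : ((Lᗮ.orthogonalProjectionOnto xbar : EuclideanSpace ℝ (Fin n))) = q := by
    have h0 : Lᗮ.orthogonalProjectionOnto (xbar - e) = 0 :=
      Submodule.orthogonalProjectionOnto_apply_of_mem_orthogonal
        (L.le_orthogonal_orthogonal hxL)
    have := map_sub (Lᗮ.orthogonalProjectionOnto) xbar e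
    rw [h0] at this
    rw [sub_eq_zero.mp this.symm]
  -- membership facts
  have hpL : xbar - q ∈ L := by
    have h1 : xbar - (Lᗮ.orthogonalProjectionOnto xbar : EuclideanSpace ℝ (Fin n)) ∈ Lᗮᗮ :=
      Submodule.sub_starProjection_mem_orthogonal (K := Lᗮ) xbar
    rw [hxq] at h1
    rwa [Submodule.orthogonal_orthogonal] at h1
  have heL : e - q ∈ L := by
    have h1 : e - (Lᗮ.orthogonalProjectionOnto e : EuclideanSpace ℝ (Fin n)) ∈ Lᗮᗮ :=
      Submodule.sub_starProjection_mem_orthogonal (K := Lᗮ) e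
    rwa [Submodule.orthogonal_orthogonal] at h1
  have hinLperp : ∀ a ∈ Lᗮ, ∀ b ∈ L, (inner ℝ a b : ℝ) = 0 := fun a ha b hb =>
    Submodule.inner_left_of_mem_orthogonal hb ha
  have hTmem : ∀ v : EuclideanSpace ℝ (Fin n),
      v ∈ T ↔ v ∈ L ∧ (inner ℝ e v : ℝ) = (α / R) * (inner ℝ xbar v : ℝ) := by
    intro v
    rw [hT]
    simp [Submodule.mem_inf, LinearMap.mem_ker, sub_eq_zero]
  have hTle : T ≤ L := by rw [hT]; exact inf_le_left
  have huT : u ∈ T := by rw [hu]; exact (T.orthogonalProjectionOnto xbar).2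
  have huL : u ∈ L := hTle huT
  have hxuT : xbar - u ∈ Tᗮ := by
    rw [hu]; exact Submodule.sub_starProjection_mem_orthogonal xbar
  have hxu : (inner ℝ xbar u : ℝ) = ‖u‖ ^ 2 := by
    have h0 : (inner ℝ (xbar - u) u : ℝ) = 0 :=
      Submodule.inner_left_of_mem_orthogonal huT hxuT
    rw [inner_sub_left] at h0
    have h1 : (inner ℝ u u : ℝ) = ‖u‖ ^ 2 := real_inner_self_eq_norm_sq u
    linarith
  have hs : sin2 = 1 - ‖u‖ ^ 2 / R ^ 2 := by
    by_cases h0 : u = 0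
    · simp [hsin2, h0]
    · rw [hsin2, if_neg h0, hxu]
      have hu0 : ‖u‖ ≠ 0 := norm_ne_zero_iff.mpr h0
      field_simp
  -- the auxiliary vector w
  obtain ⟨w, hwdef⟩ : ∃ w, w = e - (α / R) • xbar := ⟨_, rfl⟩
  set c : ℝ := 1 - α / R with hcdef
  have hxx : (inner ℝ xbar xbar : ℝ) = R ^ 2 := real_inner_self_eq_norm_sq xbar
  have hex : (inner ℝ xbar e : ℝ) = α * R := by rw [real_inner_comm]; exact hxbdry
  have hwx : (inner ℝ w xbar : ℝ) = 0 := by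
    rw [hwdef, inner_sub_left, real_inner_smul_left, hxbdry, hxx]
    field_simp
    ring
  have hw2 : ‖w‖ ^ 2 = (n:ℝ) - α ^ 2 := by
    have h1 : ‖w‖ ^ 2 = (inner ℝ w w : ℝ) := (real_inner_self_eq_norm_sq w).symm
    rw [h1, hwdef]
    simp only [inner_sub_left, inner_sub_right, real_inner_smul_left, real_inner_smul_right]
    rw [real_inner_self_eq_norm_sq e, hxx, hxbdry, hex, he2]
    field_simp
    ring
  obtain ⟨wp, hwpdef⟩ : ∃ wp, wp = w - c • q := ⟨_, rfl⟩
  have hw_decomp : w = wp + c • q := by rw [hwpdef]; abel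
  have hwpL : wp ∈ L := by
    have heq : wp = (e - q) - (α / R) • (xbar - q) := by
      rw [hwpdef, hwdef, hcdef]; module
    rw [heq]; exact L.sub_mem heL (L.smul_mem _ hpL)
  -- r : the component of xbar in L orthogonal to T
  obtain ⟨r, hrdef⟩ : ∃ r, r = (xbar - q) - u := ⟨_, rfl⟩
  have hrL : r ∈ L := by rw [hrdef]; exact L.sub_mem hpL huL
  have hx_decomp : xbar = u + r + q := by rw [hrdef]; abel
  have hqu : (inner ℝ q u : ℝ) = 0 := hinLperp q hqmem u huL
  have hqr : (inner ℝ q r : ℝ) = 0 := hinLperp q hqmem r hrL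
  have hwpq : (inner ℝ wp q : ℝ) = 0 := by
    rw [real_inner_comm]; exact hinLperp q hqmem wp hwpL
  have hwu : (inner ℝ w u : ℝ) = 0 := by
    have := ((hTmem u).mp huT).2
    rw [hwdef, inner_sub_left, real_inner_smul_left, this]
    ring
  have hwpu : (inner ℝ wp u : ℝ) = 0 := by
    rw [hwpdef, inner_sub_left, real_inner_smul_left, hwu, hqu]
    ring
  have hqq : (inner ℝ q q : ℝ) = ‖q‖ ^ 2 := real_inner_self_eq_norm_sq q
  have hwpr : (inner ℝ wp r : ℝ) = -(c * ‖q‖ ^ 2) := by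
    have h0 := hwx
    rw [hw_decomp, hx_decomp] at h0
    simp only [inner_add_left, inner_add_right, real_inner_smul_left] at h0
    rw [hwpu, hwpq, hqu, hqr, hqq] at h0
    linarith
  have hwp0 : wp ≠ 0 := by
    intro h
    rw [h] at hwpr
    simp only [inner_zero_left] at hwpr
    have h1 : ‖w‖ ^ 2 = c ^ 2 * ‖q‖ ^ 2 := by
      rw [hw_decomp, h, zero_add, norm_smul]
      simp [mul_pow, sq_abs]
    have h2 : c * ‖q‖ ^ 2 = 0 := by linarith
    have h3 : c ^ 2 * ‖q‖ ^ 2 = 0 := by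
      have h4 : c ^ 2 * ‖q‖ ^ 2 = c * (c * ‖q‖ ^ 2) := by ring
      rw [h4, h2, mul_zero]
    rw [hw2, h3] at h1
    linarith
  have hWpos : (0:ℝ) < ‖wp‖ ^ 2 := pow_pos (norm_pos_iff.mpr hwp0) 2
  -- r is parallel to wp
  have hrT : r ∈ Tᗮ := by
    have hqT : q ∈ Tᗮ := Submodule.orthogonal_le hTle hqmem
    have hr_eq : r = (xbar - u) - q := by rw [hrdef]; abel
    rw [hr_eq]; exact Tᗮ.sub_mem hxuT hqT
  have hrpar : r = ((inner ℝ wp r : ℝ) / ‖wp‖ ^ 2) • wp := by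
    set t : ℝ := (inner ℝ wp r : ℝ) / ‖wp‖ ^ 2 with htdef
    have hr'L : r - t • wp ∈ L := L.sub_mem hrL (L.smul_mem _ hwpL)
    have hwpr' : (inner ℝ wp (r - t • wp) : ℝ) = 0 := by
      rw [inner_sub_right, real_inner_smul_right, real_inner_self_eq_norm_sq, htdef]
      field_simp
      ring
    have hwr' : (inner ℝ w (r - t • wp) : ℝ) = 0 := by
      rw [hw_decomp, inner_add_left, real_inner_smul_left, hwpr',
        hinLperp q hqmem _ hr'L]
      ring
    have hr'T : r - t • wp ∈ T := by
      rw [hTmem]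
      refine ⟨hr'L, ?_⟩
      have := hwr'
      rw [hwdef, inner_sub_left, real_inner_smul_left] at this
      linarith
    have hrr' : (inner ℝ (r - t • wp) r : ℝ) = 0 :=
      Submodule.inner_right_of_mem_orthogonal hr'T hrT
    have h0 : ‖r - t • wp‖ ^ 2 = 0 := by
      rw [← real_inner_self_eq_norm_sq, inner_sub_right, hrr', real_inner_smul_right,
        real_inner_comm wp (r - t • wp), hwpr']
      ring
    have h1 : r - t • wp = 0 := norm_eq_zero.mp (pow_eq_zero_iff two_ne_zero |>.mp h0)
    exact (sub_eq_zero.mp h1)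
  have hr2 : ‖r‖ ^ 2 * ‖wp‖ ^ 2 = (c * ‖q‖ ^ 2) ^ 2 := by
    have h1 : ‖r‖ ^ 2 = ((inner ℝ wp r : ℝ) / ‖wp‖ ^ 2) ^ 2 * ‖wp‖ ^ 2 := by
      conv_lhs => rw [hrpar]
      rw [norm_smul, mul_pow, Real.norm_eq_abs, sq_abs]
    rw [h1, hwpr]
    field_simp
  have hwp2 : ‖wp‖ ^ 2 = ((n:ℝ) - α ^ 2) - c ^ 2 * ‖q‖ ^ 2 := by
    have h1 := norm_add_sq_real wp (c • q)
    rw [← hw_decomp, real_inner_smul_right, hwpq, norm_smul] at h1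
    rw [hw2] at h1
    rw [Real.norm_eq_abs, mul_pow, sq_abs] at h1
    linarith
  have hx2 : R ^ 2 = ‖u‖ ^ 2 + ‖r‖ ^ 2 + ‖q‖ ^ 2 := by
    have hur : (inner ℝ u r : ℝ) = 0 := Submodule.inner_right_of_mem_orthogonal huT hrT
    have h1 : ‖u + r‖ ^ 2 = ‖u‖ ^ 2 + ‖r‖ ^ 2 := by
      rw [norm_add_sq_real, hur]; ring
    have h2 : (inner ℝ (u + r) q : ℝ) = 0 := by
      rw [inner_add_left, real_inner_comm q u, real_inner_comm q r, hqu, hqr]; ring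
    have h3 : ‖u + r + q‖ ^ 2 = ‖u + r‖ ^ 2 + ‖q‖ ^ 2 := by
      rw [norm_add_sq_real, h2]; ring
    rw [hRdef, hx_decomp, h3, h1]
  have hu2 : ‖u‖ ^ 2 = R ^ 2 * (1 - sin2) := by
    rw [hs]; field_simp; ring
  have hspos : (0:ℝ) ≤ sin2 := by nlinarith [mul_pos hR hR, sq_nonneg ‖r‖, sq_nonneg ‖q‖]
  have hcR : R - α = c * R := by rw [hcdef]; field_simp
  have hRr : ‖r‖ ^ 2 = R ^ 2 * sin2 - ‖q‖ ^ 2 := by linear_combination -hx2 - hu2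
  rw [hRr, hwp2] at hr2
  have hden : (0:ℝ) < (n:ℝ) - α ^ 2 + (R - α) ^ 2 * sin2 := by
    have := mul_nonneg (sq_nonneg (R - α)) hspos
    linarith
  rw [eq_div_iff hden.ne']
  rw [hcR]
  linear_combination -hr2
end

section
/- Let 0 < β ≤ α < √n and e ∈ ℝ^n with ‖e‖ = √n. For every s̄ ∈ K_e(√(n−β²)) (equivalently, s̄ ∈ K_e(β)*), the cone K_e(√(n−α²)) contains the closed Euclidean ball of radius r = (1/n)·‖s̄‖·(α·√(n−β²) − β·√(n−α²)) centered at s̄. -/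
set_option maxHeartbeats 1000000 in
theorem stmt_4 (n : ℕ) (e : EuclideanSpace ℝ (Fin n))
    (he : ‖e‖ = Real.sqrt n) (α β : ℝ)
    (hβ0 : 0 < β) (hβα : β ≤ α) (hαn : α < Real.sqrt n)
    (sbar : EuclideanSpace ℝ (Fin n))
    (hs : (inner ℝ e sbar : ℝ) ≥ Real.sqrt ((n : ℝ) - β ^ 2) * ‖sbar‖) :
    Metric.closedBall sbar
        ((1 / (n : ℝ)) * ‖sbar‖ *
          (α * Real.sqrt ((n : ℝ) - β ^ 2) - β * Real.sqrt ((n : ℝ) - α ^ 2))) ⊆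
      {x : EuclideanSpace ℝ (Fin n) |
        (inner ℝ e x : ℝ) ≥ Real.sqrt ((n : ℝ) - α ^ 2) * ‖x‖} := by
  intro x hx
  simp only [Metric.mem_closedBall, dist_eq_norm] at hx
  simp only [Set.mem_setOf_eq, ge_iff_le]
  -- basic positivity facts
  have hα0 : 0 < α := lt_of_lt_of_le hβ0 hβα
  have hS0 : 0 < Real.sqrt n := lt_trans hα0 hαn
  set S : ℝ := Real.sqrt n with hSdef
  have hN2 : (n : ℝ) = S ^ 2 := (Real.sq_sqrt (Nat.cast_nonneg n)).symm
  have hN0 : (0 : ℝ) < n := by rw [hN2]; positivity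
  have hα2 : α ^ 2 < (n : ℝ) := by
    rw [hN2]; exact pow_lt_pow_left₀ hαn hα0.le two_ne_zero
  have hβ2 : β ^ 2 < (n : ℝ) := by
    rw [hN2]
    exact pow_lt_pow_left₀ (lt_of_le_of_lt hβα hαn) hβ0.le two_ne_zero
  set a : ℝ := Real.sqrt ((n : ℝ) - β ^ 2) with hadef
  set b : ℝ := Real.sqrt ((n : ℝ) - α ^ 2) with hbdef
  have ha2 : a ^ 2 = S ^ 2 - β ^ 2 := by
    rw [hadef, Real.sq_sqrt (by linarith), hN2]
  have hb2 : b ^ 2 = S ^ 2 - α ^ 2 := by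
    rw [hbdef, Real.sq_sqrt (by linarith), hN2]
  have ha0 : 0 < a := Real.sqrt_pos.2 (by linarith)
  have hb0 : 0 < b := Real.sqrt_pos.2 (by linarith)
  have hba : b ≤ a :=
    Real.sqrt_le_sqrt (by nlinarith [pow_le_pow_left₀ hβ0.le hβα 2])
  have hab : β * b ≤ α * a := mul_le_mul hβα hba hb0.le hα0.le
  -- inner products and orthogonal decompositions
  set p : ℝ := inner ℝ e sbar with hpdef
  set d : EuclideanSpace ℝ (Fin n) := x - sbar with hddef
  set q : ℝ := inner ℝ e d with hqdef
  have hee : (inner ℝ e e : ℝ) = (n : ℝ) := by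
    rw [real_inner_self_eq_norm_sq, he]; exact hN2.symm
  have hxsd : x = sbar + d := by rw [hddef]; abel
  have hux : (inner ℝ e x : ℝ) = p + q := by
    rw [hxsd, inner_add_right]
  set sp : EuclideanSpace ℝ (Fin n) := sbar - (p / (n : ℝ)) • e with hspdef
  set dp : EuclideanSpace ℝ (Fin n) := d - (q / (n : ℝ)) • e with hdpdef
  set xp : EuclideanSpace ℝ (Fin n) := x - ((p + q) / (n : ℝ)) • e with hxpdef
  set v : ℝ := ‖sp‖ with hvdef
  set m : ℝ := ‖dp‖ with hmdef
  set w : ℝ := ‖xp‖ with hwdef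
  have hv0 : 0 ≤ v := norm_nonneg _
  have hm0 : 0 ≤ m := norm_nonneg _
  have hw0 : 0 ≤ w := norm_nonneg _
  -- Pythagoras
  have pyth : ∀ (y : EuclideanSpace ℝ (Fin n)) (t : ℝ),
      (inner ℝ e y : ℝ) = t →
      S ^ 2 * ‖y‖ ^ 2 = t ^ 2 + S ^ 2 * ‖y - (t / (n : ℝ)) • e‖ ^ 2 := by
    intro y t ht
    have hy : y = (t / (n : ℝ)) • e + (y - (t / (n : ℝ)) • e) := by abel
    have hper : (inner ℝ e (y - (t / (n : ℝ)) • e) : ℝ) = 0 := by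
      rw [inner_sub_right, real_inner_smul_right, hee, ht]
      field_simp
      ring
    have hcross : (inner ℝ ((t / (n : ℝ)) • e) (y - (t / (n : ℝ)) • e) : ℝ) = 0 := by
      rw [real_inner_smul_left, hper, mul_zero]
    have hnsq : ‖y‖ ^ 2 = ‖(t / (n : ℝ)) • e‖ ^ 2 + 2 * (inner ℝ ((t / (n : ℝ)) • e) (y - (t / (n : ℝ)) • e) : ℝ) + ‖y - (t / (n : ℝ)) • e‖ ^ 2 := by
      conv_lhs => rw [hy]
      exact norm_add_sq_real _ _
    rw [hcross, mul_zero, add_zero] at hnsq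
    have hsm : ‖(t / (n : ℝ)) • e‖ ^ 2 = t ^ 2 / (n : ℝ) := by
      rw [norm_smul, mul_pow, he, ← hN2]
      rw [Real.norm_eq_abs, sq_abs]
      field_simp
    rw [hsm] at hnsq
    rw [hnsq, hN2]
    field_simp
  have hnormS : S ^ 2 * ‖sbar‖ ^ 2 = p ^ 2 + S ^ 2 * v ^ 2 := by
    have := pyth sbar p rfl
    rwa [← hspdef, ← hvdef] at this
  have hnormD : S ^ 2 * ‖d‖ ^ 2 = q ^ 2 + S ^ 2 * m ^ 2 := by
    have := pyth d q rfl
    rwa [← hdpdef, ← hmdef] at this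
  have hnormX : S ^ 2 * ‖x‖ ^ 2 = (p + q) ^ 2 + S ^ 2 * w ^ 2 := by
    have := pyth x (p + q) hux
    rwa [← hxpdef, ← hwdef] at this
  have hxp_split : xp = sp + dp := by
    rw [hxpdef, hspdef, hdpdef, hxsd]
    have : ((p + q) / (n : ℝ)) • e = (p / (n : ℝ)) • e + (q / (n : ℝ)) • e := by
      rw [← add_smul, add_div]
    rw [this]
    abel
  have hw_le : w ≤ v + m := by
    rw [hwdef, hxp_split, hvdef, hmdef]
    exact norm_add_le _ _
  -- pass to scalar variables
  rw [hux]
  set ns : ℝ := ‖sbar‖ with hnsdef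
  set nd : ℝ := ‖d‖ with hnddef
  set nx : ℝ := ‖x‖ with hnxdef
  have hns0 : 0 ≤ ns := norm_nonneg sbar
  have hnd0 : 0 ≤ nd := norm_nonneg d
  have hnx0 : 0 ≤ nx := norm_nonneg x
  clear_value S a b p q v m w d sp dp xp ns nd nx
  clear hee hxsd pyth hpdef hqdef hddef hspdef hdpdef hxpdef hvdef
    hmdef hwdef hadef hbdef hSdef he hαn hxp_split hnsdef hnddef hnxdef hux
  -- step 1 : a*S*v ≤ β*p
  have hp0' : 0 ≤ a * ns := mul_nonneg ha0.le hns0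
  have hp0 : 0 ≤ p := le_trans hp0' hs
  have hp2 : a ^ 2 * ns ^ 2 ≤ p ^ 2 := by
    have := mul_le_mul hs hs hp0' hp0
    nlinarith [this]
  have hG : a * S * v ≤ β * p := by
    have h1 : S ^ 2 * (a ^ 2 * ns ^ 2) ≤ S ^ 2 * p ^ 2 :=
      mul_le_mul_of_nonneg_left hp2 (sq_nonneg S)
    have h2 : a ^ 2 * (S ^ 2 * ns ^ 2) = a ^ 2 * (p ^ 2 + S ^ 2 * v ^ 2) := by
      rw [hnormS]
    have h3 : a ^ 2 * p ^ 2 = (S ^ 2 - β ^ 2) * p ^ 2 := by rw [ha2]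
    have hsq : (a * S * v) ^ 2 ≤ (β * p) ^ 2 := by linarith [h1, h2, h3]
    exact le_of_pow_le_pow_left₀ two_ne_zero (by positivity) hsq
  -- step 2 : key inequality (α*a - β*b) * ns ≤ α*p - b*S*v
  have hc1 : 0 ≤ α ^ 2 * β + 2 * α * a * b - β * b ^ 2 := by
    have h1 : β * b * b ≤ α * a * b := mul_le_mul_of_nonneg_right hab hb0.le
    have h2 : 0 ≤ α * a * b := by positivity
    have h3 : 0 ≤ α ^ 2 * β := by positivity
    linarith [h1, h2, h3]
  have hL : 0 ≤ (α ^ 2 * β + 2 * α * a * b - β * b ^ 2) * p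
      + (S * a * (α ^ 2 - b ^ 2) - 2 * α * β * b * S) * v := by
    have hid : β * ((α ^ 2 * β + 2 * α * a * b - β * b ^ 2) * p
        + (S * a * (α ^ 2 - b ^ 2) - 2 * α * β * b * S) * v)
        = (α ^ 2 * β + 2 * α * a * b - β * b ^ 2) * (β * p - a * S * v)
          + 2 * S * (α * a - β * b) * (a * b + α * β) * v := by ring
    have h1 : 0 ≤ (α ^ 2 * β + 2 * α * a * b - β * b ^ 2) * (β * p - a * S * v) :=
      mul_nonneg hc1 (by linarith)
    have h2 : 0 ≤ 2 * S * (α * a - β * b) * (a * b + α * β) * v := by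
      have h2a : 0 ≤ 2 * S * (α * a - β * b) :=
        mul_nonneg (by positivity) (by linarith)
      have h2b : 0 ≤ a * b + α * β := by positivity
      exact mul_nonneg (mul_nonneg h2a h2b) hv0
    have h3 : β * 0 ≤ β * ((α ^ 2 * β + 2 * α * a * b - β * b ^ 2) * p
        + (S * a * (α ^ 2 - b ^ 2) - 2 * α * β * b * S) * v) := by
      rw [mul_zero, hid]; linarith [h1, h2]
    exact le_of_mul_le_mul_left h3 hβ0
  have hident : S ^ 2 * (α * p - b * S * v) ^ 2
      = (β * p - a * S * v) * ((α ^ 2 * β + 2 * α * a * b - β * b ^ 2) * p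
          + (S * a * (α ^ 2 - b ^ 2) - 2 * α * β * b * S) * v)
        + (α * a - β * b) ^ 2 * (p ^ 2 + S ^ 2 * v ^ 2) := by
    linear_combination (-(α * p - b * S * v) ^ 2) * ha2
  have hpos2 : 0 ≤ α * p - b * S * v := by
    have h1 : β * p ≤ α * p := mul_le_mul_of_nonneg_right hβα hp0
    have h2 : b * S * v ≤ a * S * v := by
      apply mul_le_mul_of_nonneg_right _ hv0
      exact mul_le_mul_of_nonneg_right hba hS0.le
    linarith
  have hkey : (α * a - β * b) * ns ≤ α * p - b * S * v := by
    have hsq : ((α * a - β * b) * ns) ^ 2 ≤ (α * p - b * S * v) ^ 2 := by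
      have hGL : 0 ≤ (β * p - a * S * v) * ((α ^ 2 * β + 2 * α * a * b - β * b ^ 2) * p
          + (S * a * (α ^ 2 - b ^ 2) - 2 * α * β * b * S) * v) :=
        mul_nonneg (by linarith) hL
      have hmul : (α * a - β * b) ^ 2 * (p ^ 2 + S ^ 2 * v ^ 2)
          = S ^ 2 * ((α * a - β * b) * ns) ^ 2 := by
        rw [← hnormS]; ring
      have h4 : S ^ 2 * ((α * a - β * b) * ns) ^ 2 ≤ S ^ 2 * (α * p - b * S * v) ^ 2 := by
        linarith [hident, hGL, hmul]
      exact le_of_mul_le_mul_left h4 (by positivity)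
    exact le_of_pow_le_pow_left₀ two_ne_zero hpos2 hsq
  -- step 3 : Cauchy-Schwarz type bound on the perturbation
  have hCS : b * S * m - α * q ≤ S ^ 2 * nd := by
    have hd2' : (S ^ 2 * nd) ^ 2 = S ^ 2 * (q ^ 2 + S ^ 2 * m ^ 2) := by
      rw [← hnormD]; ring
    have hsq : (b * S * m - α * q) ^ 2 ≤ (S ^ 2 * nd) ^ 2 := by
      have hid2 : (S ^ 2 * nd) ^ 2
          = (b * S * m - α * q) ^ 2 + (b * q + α * S * m) ^ 2 := by
        linear_combination hd2' - (q ^ 2 + S ^ 2 * m ^ 2) * hb2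
      linarith [hid2, sq_nonneg (b * q + α * S * m)]
    exact le_of_pow_le_pow_left₀ two_ne_zero (by positivity) hsq
  -- step 4 : radius bound
  have hr : S ^ 2 * nd ≤ (α * a - β * b) * ns := by
    have h1 : S ^ 2 * nd ≤ S ^ 2 * ((1 / (n : ℝ)) * ns * (α * a - β * b)) :=
      mul_le_mul_of_nonneg_left hx (by positivity)
    calc S ^ 2 * nd ≤ S ^ 2 * ((1 / (n : ℝ)) * ns * (α * a - β * b)) := h1
      _ = (α * a - β * b) * ns := by rw [hN2]; field_simp
  -- step 5 : combine
  have hu : b * S * w ≤ α * (p + q) := by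
    have h1 : b * S * w ≤ b * S * (v + m) :=
      mul_le_mul_of_nonneg_left hw_le (by positivity)
    linarith [hkey, hCS, hr, h1]
  have hu0 : 0 ≤ p + q := by
    have h2 : 0 ≤ α * (p + q) := le_trans (by positivity) hu
    have h3 : α * 0 ≤ α * (p + q) := by rw [mul_zero]; exact h2
    exact le_of_mul_le_mul_left h3 hα0
  -- final
  have hsq : (b * nx) ^ 2 ≤ (p + q) ^ 2 := by
    have h1 : (b * S * w) ^ 2 ≤ (α * (p + q)) ^ 2 := by
      have h2 := mul_le_mul hu hu (by positivity) (le_trans (by positivity) hu)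
      linarith [h2]
    have hmul2 : b ^ 2 * (S ^ 2 * nx ^ 2) = b ^ 2 * ((p + q) ^ 2 + S ^ 2 * w ^ 2) := by
      rw [hnormX]
    have h3 : b ^ 2 * (p + q) ^ 2 + α ^ 2 * (p + q) ^ 2 = S ^ 2 * (p + q) ^ 2 := by
      linear_combination ((p + q) ^ 2) * hb2
    have h4 : S ^ 2 * (b * nx) ^ 2 ≤ S ^ 2 * (p + q) ^ 2 := by
      linarith [hmul2, h1, h3]
    exact le_of_mul_le_mul_left h4 (by positivity)
  exact le_of_pow_le_pow_left₀ two_ne_zero hu0 hsq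
end

section
/- Define the sequence α_{i+1} = α_i·√((1+α_i)/2) with 0 < α_0 < 1. If α_i ≤ 3/4 then α_i/α_{i+1} ≥ √(8/7), and if α_i ≥ 3/4 then (1 − α_{i+1})/(1 − α_i) ≥ 9/8. -/
theorem stmt_7 (α : ℝ) (h0 : 0 < α) (h1 : α < 1) :
    (α ≤ 3 / 4 → α / (α * Real.sqrt ((1 + α) / 2)) ≥ Real.sqrt (8 / 7)) ∧
    (3 / 4 ≤ α →
      (1 - α * Real.sqrt ((1 + α) / 2)) / (1 - α) ≥ 9 / 8) := by
  set s := Real.sqrt ((1 + α) / 2) with hs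
  have hsq : s ^ 2 = (1 + α) / 2 := Real.sq_sqrt (by linarith)
  have hspos : 0 < s := Real.sqrt_pos.2 (by linarith)
  constructor
  · intro hle
    have heq : α / (α * s) = 1 / s := by
      field_simp
    rw [heq, ge_iff_le, le_div_iff₀ hspos]
    set t := Real.sqrt (8 / 7) with ht
    have htq : t ^ 2 = 8 / 7 := Real.sq_sqrt (by norm_num)
    have htpos : 0 < t := Real.sqrt_pos.2 (by norm_num)
    nlinarith [sq_nonneg (t * s - 1), sq_nonneg (t * s), mul_pos htpos hspos]
  · intro hge
    rw [ge_iff_le, le_div_iff₀ (by linarith : (0:ℝ) < 1 - α)]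
    have key : α * s ≤ (9 * α - 1) / 8 := by
      have h2 : (α * s) ^ 2 = α ^ 2 * (1 + α) / 2 := by
        rw [mul_pow, hsq]; ring
      have hquad : (0:ℝ) ≤ 32 * α ^ 2 - 17 * α + 1 := by nlinarith
      have hcubic : 32 * α ^ 3 - 49 * α ^ 2 + 18 * α - 1 ≤ 0 := by
        nlinarith [mul_nonneg (sub_nonneg.2 h1.le) hquad]
      nlinarith [sq_nonneg (8 * α * s - (9 * α - 1)), mul_pos h0 hspos]
    nlinarith
end

section
/- Let E ∈ S^n be symmetric positive definite, 0 < α < 1, and let X ≠ 0 be a symmetric matrix with tr(E⁻¹X) = α·(tr((E⁻¹X)²))^{1/2}. Set S := (1/(n−α²))·(E⁻¹ − (α²/tr(E⁻¹X))·E⁻¹XE⁻¹). Then tr(ES) = 1 and tr(XS) = 0. -/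
open Matrix
open scoped MatrixOrder
set_option maxHeartbeats 1000000 in

theorem stmt_11 (n : ℕ) (E X : Matrix (Fin n) (Fin n) ℝ)
    (hEsym : E.IsSymm) (hEpd : E.PosDef) (hXsym : X.IsSymm) (hX0 : X ≠ 0)
    (α : ℝ) (hα0 : 0 < α) (hα1 : α < 1)
    (hbdry : (E⁻¹ * X).trace =
      α * Real.sqrt ((E⁻¹ * X * (E⁻¹ * X)).trace))
    (S : Matrix (Fin n) (Fin n) ℝ)
    (hS : S = (1 / ((n : ℝ) - α ^ 2)) •
      (E⁻¹ - (α ^ 2 / (E⁻¹ * X).trace) • (E⁻¹ * X * E⁻¹))) :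
    (E * S).trace = 1 ∧ (X * S).trace = 0 := by
  have hA : (E⁻¹).PosDef := hEpd.inv
  have hAs : CFC.sqrt (E⁻¹) * CFC.sqrt (E⁻¹) = E⁻¹ := CFC.sqrt_mul_sqrt_self _ hA.posSemidef.nonneg
  set B := CFC.sqrt (E⁻¹) with hBdef
  have hBsym : Bᵀ = B := (CFC.sqrt_nonneg (E⁻¹)).posSemidef.1
  have hdetB : IsUnit B.det := by
    rw [isUnit_iff_ne_zero]
    intro h
    have h2 : (E⁻¹).det ≠ 0 := hA.det_pos.ne'
    rw [← hAs, det_mul, h, mul_zero] at h2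
    exact h2 rfl
  set M := B * X * B with hMdef
  have hM0 : M ≠ 0 := by
    intro h
    apply hX0
    have : B⁻¹ * M * B⁻¹ = X := by
      rw [hMdef, Matrix.mul_assoc, Matrix.mul_assoc, Matrix.mul_nonsing_inv _ hdetB,
        Matrix.mul_one, ← Matrix.mul_assoc, Matrix.nonsing_inv_mul _ hdetB, Matrix.one_mul]
    rw [← this, h, Matrix.mul_zero, Matrix.zero_mul]
  have hXt : Xᵀ = X := hXsym
  have hMsym : ∀ i j, M j i = M i j := by
    intro i j
    have hMs : Mᵀ = M := by
      rw [hMdef, Matrix.transpose_mul, Matrix.transpose_mul, hBsym, hXt, Matrix.mul_assoc]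
    calc M j i = Mᵀ i j := rfl
      _ = M i j := by rw [hMs]
  have hMt : (M * M).trace = ∑ i, ∑ j, M i j ^ 2 := by
    simp only [Matrix.trace, Matrix.diag, Matrix.mul_apply, sq]
    refine Finset.sum_congr rfl fun i _ => Finset.sum_congr rfl fun j _ => ?_
    rw [hMsym i j]
  have hMMpos : 0 < (M * M).trace := by
    rw [hMt]
    obtain ⟨i, j, hij⟩ : ∃ i j, M i j ≠ 0 := by
      by_contra h
      push_neg at h
      exact hM0 (Matrix.ext fun i j => h i j)
    exact Finset.sum_pos' (fun i _ => Finset.sum_nonneg fun j _ => sq_nonneg _)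
      ⟨i, Finset.mem_univ i, Finset.sum_pos' (fun j _ => sq_nonneg _)
        ⟨j, Finset.mem_univ j, by positivity⟩⟩
  have hq : (E⁻¹ * X * (E⁻¹ * X)).trace = (M * M).trace := by
    rw [← hAs,
      show B * B * X * (B * B * X) = B * (B * (X * (B * (B * X)))) by simp only [Matrix.mul_assoc],
      Matrix.trace_mul_comm,
      show B * (X * (B * (B * X))) * B = M * M by rw [hMdef]; simp only [Matrix.mul_assoc]]
  set q := (E⁻¹ * X * (E⁻¹ * X)).trace with hqdef
  set t := (E⁻¹ * X).trace with htdef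
  have hqpos : 0 < q := hq ▸ hMMpos
  have htpos : 0 < t := by
    rw [hbdry]
    exact mul_pos hα0 (Real.sqrt_pos.mpr hqpos)
  have ht2 : t ^ 2 = α ^ 2 * q := by
    rw [hbdry, mul_pow, Real.sq_sqrt hqpos.le]
  have hn0 : n ≠ 0 := by
    rintro rfl
    exact hX0 (Matrix.ext fun i _ => i.elim0)
  have hden : 0 < (n : ℝ) - α ^ 2 := by
    have h1 : (1 : ℝ) ≤ n := by exact_mod_cast Nat.one_le_iff_ne_zero.mpr hn0
    nlinarith
  have hE1 : E * E⁻¹ = 1 := Matrix.mul_nonsing_inv E (isUnit_iff_ne_zero.mpr hEpd.det_pos.ne')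
  -- compute trace (E * S)
  have hES : (E * (E⁻¹ * X * E⁻¹)).trace = t := by
    rw [show E * (E⁻¹ * X * E⁻¹) = E * E⁻¹ * (X * E⁻¹) by simp only [Matrix.mul_assoc],
      hE1, Matrix.one_mul, Matrix.trace_mul_comm]
  have hXS : (X * (E⁻¹ * X * E⁻¹)).trace = q := by
    rw [Matrix.trace_mul_comm, hqdef]
    congr 1
    simp only [Matrix.mul_assoc]
  constructor
  · rw [hS, Matrix.mul_smul, Matrix.trace_smul, Matrix.mul_sub, Matrix.trace_sub,
      Matrix.mul_smul, Matrix.trace_smul, hES, hE1, Matrix.trace_one, smul_eq_mul,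
      smul_eq_mul]
    simp only [Fintype.card_fin]
    rw [div_mul_cancel₀ _ htpos.ne', one_div, inv_mul_cancel₀ hden.ne']
  · rw [hS, Matrix.mul_smul, Matrix.trace_smul, Matrix.mul_sub, Matrix.trace_sub,
      Matrix.mul_smul, Matrix.trace_smul, hXS, smul_eq_mul, smul_eq_mul,
      Matrix.trace_mul_comm, ← htdef]
    have h5 : α ^ 2 / t * q = t := by
      rw [div_mul_eq_mul_div, div_eq_iff htpos.ne', ← sq, ht2]
    rw [h5]
    rw [sub_self, mul_zero]
end

section
/- Let E be an n×n symmetric positive definite matrix, 0 < α < 1, and X ≠ 0 a symmetric matrix on the boundary of K_E(α), i.e., tr(E⁻¹X) = α·tr((E⁻¹X)²)^{1/2}. With S := (1/(n−α²))·(E⁻¹ − (α²/tr(E⁻¹X))·E⁻¹XE⁻¹) and q(t) := tr(((E+tX)S)²), for every t with 0 < t ≤ α/‖X‖_E (where ‖X‖_E := tr((E⁻¹X)²)^{1/2}) one has q(t) < (1/(n−α²))·(1 − 2t·((1−α)/(n−α²))·‖X‖_E·(α − t‖X‖_E)). -/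
open Matrix

lemma cyc_pow {m : ℕ} (P Q : Matrix (Fin m) (Fin m) ℝ) (k : ℕ) :
    ((P*Q)^k).trace = ((Q*P)^k).trace := by
  cases k with
  | zero => simp
  | succ m' =>
    have hsc : SemiconjBy Q (P*Q) (Q*P) := (mul_assoc Q P Q).symm
    have h := hsc.pow_right m'
    calc ((P*Q)^(m'+1)).trace = ((P*Q)^m' * P * Q).trace := by rw [pow_succ, mul_assoc]
    _ = (Q * ((P*Q)^m' * P)).trace := (Matrix.trace_mul_comm _ _).symm
    _ = ((Q*P)^m' * Q * P).trace := by rw [← mul_assoc, h.eq, mul_assoc]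
    _ = ((Q*P)^(m'+1)).trace := by rw [pow_succ, mul_assoc]

lemma sym_trace_sq {m : ℕ} (C : Matrix (Fin m) (Fin m) ℝ) (hC : Cᵀ = C) :
    (C*C).trace = ∑ i, ∑ j, (C i j)^2 := by
  simp only [Matrix.trace, Matrix.diag, Matrix.mul_apply]
  refine Finset.sum_congr rfl fun i _ => Finset.sum_congr rfl fun j _ => ?_
  rw [pow_two]
  congr 1
  exact congrFun (congrFun hC i) j

lemma entry_sq_nonneg_trace {m : ℕ} (C : Matrix (Fin m) (Fin m) ℝ) (hC : Cᵀ = C) :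
    0 ≤ (C*C).trace := by
  rw [sym_trace_sq C hC]
  exact Finset.sum_nonneg fun i _ => Finset.sum_nonneg fun j _ => sq_nonneg _

lemma trace_pow4_le {m : ℕ} (C : Matrix (Fin m) (Fin m) ℝ) (hC : Cᵀ = C) :
    ((C*C)*(C*C)).trace ≤ ((C*C).trace)^2 := by
  have hCC : (C*C)ᵀ = C*C := by rw [Matrix.transpose_mul, hC]
  rw [sym_trace_sq (C*C) hCC, sym_trace_sq C hC]
  calc ∑ i, ∑ j, ((C*C) i j)^2
      ≤ ∑ i, ∑ j, (∑ k, (C i k)^2) * (∑ k, (C k j)^2) := by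
        refine Finset.sum_le_sum fun i _ => Finset.sum_le_sum fun j _ => ?_
        rw [Matrix.mul_apply]
        exact Finset.sum_mul_sq_le_sq_mul_sq _ _ _
    _ = (∑ i, ∑ k, (C i k)^2) * (∑ j, ∑ k, (C k j)^2) := by
        rw [Finset.sum_mul_sum]
    _ = (∑ i, ∑ j, (C i j)^2)^2 := by
        rw [Finset.sum_comm (f := fun j k => (C k j)^2)]
        ring

lemma trace_pow3_sq_le {m : ℕ} (C : Matrix (Fin m) (Fin m) ℝ) (hC : Cᵀ = C) :
    ((C*(C*C)).trace)^2 ≤ ((C*C).trace)^3 := by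
  have h1 : (C*(C*C)).trace = ∑ p : Fin m × Fin m, C p.1 p.2 * (C*C) p.2 p.1 := by
    rw [Fintype.sum_prod_type]
    simp only [Matrix.trace, Matrix.diag, Matrix.mul_apply]
  have h2 : (∑ p : Fin m × Fin m, (C p.1 p.2)^2) = (C*C).trace := by
    rw [Fintype.sum_prod_type, sym_trace_sq C hC]
  have h3 : (∑ p : Fin m × Fin m, ((C*C) p.2 p.1)^2) = ((C*C)*(C*C)).trace := by
    have hCC : (C*C)ᵀ = C*C := by rw [Matrix.transpose_mul, hC]
    rw [Fintype.sum_prod_type, sym_trace_sq (C*C) hCC]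
    exact Finset.sum_comm
  have cs := Finset.sum_mul_sq_le_sq_mul_sq Finset.univ
    (fun p : Fin m × Fin m => C p.1 p.2) (fun p => (C*C) p.2 p.1)
  rw [h1]
  calc (∑ p : Fin m × Fin m, C p.1 p.2 * (C*C) p.2 p.1)^2
      ≤ (∑ p : Fin m × Fin m, (C p.1 p.2)^2) * (∑ p : Fin m × Fin m, ((C*C) p.2 p.1)^2) := cs
    _ = (C*C).trace * (((C*C)*(C*C)).trace) := by rw [h2, h3]
    _ ≤ (C*C).trace * ((C*C).trace)^2 := by
        exact mul_le_mul_of_nonneg_left (trace_pow4_le C hC) (entry_sq_nonneg_trace C hC)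
    _ = ((C*C).trace)^3 := by ring
open scoped MatrixOrder in
lemma exists_sqrt_psd {m : ℕ} (A : Matrix (Fin m) (Fin m) ℝ) (hA : A.PosSemidef) :
    ∃ F : Matrix (Fin m) (Fin m) ℝ, F * F = A ∧ Fᴴ = F :=
  ⟨CFC.sqrt A, CFC.sqrt_mul_sqrt_self A hA.nonneg, (CFC.sqrt_nonneg A).posSemidef.1⟩
lemma final_ineq (ν α t w a b T3 T4 : ℝ)
    (hν : 1 ≤ ν) (hα0 : 0 < α) (hα1 : α < 1) (hw0 : 0 < w) (ht0 : 0 < t)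
    (haw : a * w = t * w - α) (hbw : b * w = -(t*α))
    (hT3 : T3 ≤ w^3) (hT4 : T4 ≤ w^4) (hab : 0 ≤ a*b)
    (hsα : t * w ≤ α) :
    ν + 2*a*(α*w) + (a^2+2*b)*w^2 + 2*(a*b)*T3 + b^2*T4
      < (ν - α^2) - 2*t*(1-α)*w*(α - t*w) := by
  have hint1 : (a*b) * T3 ≤ (a*b) * w^3 := mul_le_mul_of_nonneg_left hT3 hab
  have hint2 : b^2 * T4 ≤ b^2 * w^4 := mul_le_mul_of_nonneg_left hT4 (sq_nonneg b)
  have e1 : 2*a*(α*w) = 2*α*(t*w - α) := by rw [← haw]; ring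
  have e2 : a^2 * w^2 = (t*w - α)^2 := by rw [← haw]; ring
  have e3 : 2*b*w^2 = 2*(-(t*α))*w := by rw [← hbw]; ring
  have e4 : (a*b) * w^3 = (t*w - α) * (-(t*α)) * w := by rw [← haw, ← hbw]; ring
  have e5 : b^2 * w^4 = (-(t*α))^2 * w^2 := by rw [← hbw]; ring
  have hs0 : 0 < t*w := mul_pos ht0 hw0
  have hmargin : 0 < (t*w)^2 * (1 - α^2) := by
    apply mul_pos (pow_pos hs0 2)
    nlinarith
  nlinarith [hint1, hint2, e1, e2, e3, e4, e5, hs0, hsα, hmargin]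
theorem stmt_12 (n : ℕ) (E X : Matrix (Fin n) (Fin n) ℝ)
    (hEsym : E.IsSymm) (hEpd : E.PosDef) (hXsym : X.IsSymm) (hX0 : X ≠ 0)
    (α : ℝ) (hα0 : 0 < α) (hα1 : α < 1)
    (normXE : ℝ) (hnorm : normXE = Real.sqrt ((E⁻¹ * X * (E⁻¹ * X)).trace))
    (hbdry : (E⁻¹ * X).trace = α * normXE)
    (S : Matrix (Fin n) (Fin n) ℝ)
    (hS : S = (1 / ((n : ℝ) - α ^ 2)) •
      (E⁻¹ - (α ^ 2 / (E⁻¹ * X).trace) • (E⁻¹ * X * E⁻¹)))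
    (t : ℝ) (ht0 : 0 < t) (ht : t ≤ α / normXE) :
    (((E + t • X) * S) * ((E + t • X) * S)).trace <
      (1 / ((n : ℝ) - α ^ 2)) *
        (1 - 2 * t * ((1 - α) / ((n : ℝ) - α ^ 2)) * normXE * (α - t * normXE)) := by
  -- basic facts
  have hn0 : 0 < n := by
    rcases Nat.eq_zero_or_pos n with h | h
    · subst h
      exact absurd (by ext i; exact i.elim0) hX0
    · exact h
  have hn1 : (1:ℝ) ≤ (n:ℝ) := by exact_mod_cast hn0
  have hβ : 0 < (n:ℝ) - α^2 := by nlinarith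
  -- inverse facts
  have hEdet : IsUnit E.det := hEpd.det_pos.ne'.isUnit
  have hEinv : E * E⁻¹ = 1 := Matrix.mul_nonsing_inv E hEdet
  have hEinv' : E⁻¹ * E = 1 := Matrix.nonsing_inv_mul E hEdet
  -- square root of E⁻¹
  have hEipd : (E⁻¹).PosDef := hEpd.inv
  set F : Matrix (Fin n) (Fin n) ℝ := Classical.choose (exists_sqrt_psd _ hEipd.posSemidef) with hFdef
  have hF2 : F * F = E⁻¹ := (Classical.choose_spec (exists_sqrt_psd _ hEipd.posSemidef)).1
  have hFH : Fᴴ = F := (Classical.choose_spec (exists_sqrt_psd _ hEipd.posSemidef)).2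
  have hFT : Fᵀ = F := hFH
  set B : Matrix (Fin n) (Fin n) ℝ := F * X * F with hBdef
  have hXT : Xᵀ = X := hXsym
  have hBT : Bᵀ = B := by
    rw [hBdef, Matrix.transpose_mul, Matrix.transpose_mul, hFT, hXT, mul_assoc]
  -- trace chain : ((X*E⁻¹)^k).trace = (B^k).trace
  have hMA : ∀ k : ℕ, ((X*E⁻¹)^k).trace = (B^k).trace := by
    intro k
    rw [cyc_pow X E⁻¹ k]
    have : E⁻¹ * X = F * (F * X) := by rw [← hF2, mul_assoc]
    rw [this, cyc_pow F (F*X) k]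
  have hAB : ∀ k : ℕ, ((E⁻¹*X)^k).trace = (B^k).trace := by
    intro k
    rw [← cyc_pow X E⁻¹ k]
    exact hMA k
  -- B ≠ 0
  have hFdet : F.det ≠ 0 := by
    intro h
    have : (E⁻¹).det = 0 := by rw [← hF2, Matrix.det_mul, h, mul_zero]
    exact hEipd.det_pos.ne' this
  have hBne : B ≠ 0 := by
    intro hB0
    apply hX0
    have hFi : F⁻¹ * F = 1 := Matrix.nonsing_inv_mul F hFdet.isUnit
    have hFi' : F * F⁻¹ = 1 := Matrix.mul_nonsing_inv F hFdet.isUnit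
    have : X = F⁻¹ * B * F⁻¹ := by
      rw [hBdef]
      calc X = (F⁻¹ * F) * X * (F * F⁻¹) := by rw [hFi, hFi', one_mul, mul_one]
      _ = F⁻¹ * (F * X * F) * F⁻¹ := by simp only [mul_assoc]
    rw [this, hB0, mul_zero, zero_mul]
  set p2 : ℝ := (B*B).trace with hp2def
  have hp2pos : 0 < p2 := by
    obtain ⟨i, j, hij⟩ : ∃ i j, B i j ≠ 0 := by
      by_contra h
      push_neg at h
      exact hBne (by ext i j; simp [h])
    rw [hp2def, sym_trace_sq B hBT]
    refine Finset.sum_pos' (fun k _ => Finset.sum_nonneg fun l _ => sq_nonneg _)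
      ⟨i, Finset.mem_univ i, Finset.sum_pos'
        (fun l _ => sq_nonneg _) ⟨j, Finset.mem_univ j, by positivity⟩⟩
  -- normXE facts
  have htrAA : (E⁻¹ * X * (E⁻¹ * X)).trace = p2 := by
    have h2 := hAB 2
    rw [pow_two, pow_two] at h2
    exact h2
  have hw : normXE = Real.sqrt p2 := by rw [hnorm, htrAA]
  have hw0 : 0 < normXE := by rw [hw]; exact Real.sqrt_pos.mpr hp2pos
  have hw2 : normXE^2 = p2 := by rw [hw]; exact Real.sq_sqrt hp2pos.le
  -- coefficient simplification
  have hc : α^2 / (E⁻¹*X).trace = α / normXE := by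
    rw [hbdry, pow_two, mul_div_mul_left _ _ hα0.ne']
  set M : Matrix (Fin n) (Fin n) ℝ := X * E⁻¹ with hMdef
  have haux1 : E * (E⁻¹ * X * E⁻¹) = M := by
    simp only [← mul_assoc]
    rw [hEinv, one_mul, hMdef]
  have haux2 : X * (E⁻¹ * X * E⁻¹) = M * M := by
    rw [hMdef]
    simp only [mul_assoc]
  set β : ℝ := (n:ℝ) - α^2 with hβdef
  set a : ℝ := t - α/normXE with hadef
  set b : ℝ := -(t*(α/normXE)) with hbdef
  have hkey : (E + t•X) * S
      = (1/β) • ((1 : Matrix (Fin n) (Fin n) ℝ) + a • M + b • (M*M)) := by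
    rw [hS, hc, mul_smul_comm]
    congr 1
    simp only [mul_sub, add_mul, smul_mul_assoc, mul_smul_comm, hEinv, haux1, haux2,
      smul_smul, ← hMdef]
    rw [hadef, hbdef]
    module
  have hq : (((E + t • X) * S) * ((E + t • X) * S)).trace
      = (1/β)^2 * ((n:ℝ) + 2*a*M.trace + (a^2+2*b)*(M*M).trace
          + 2*(a*b)*(M*(M*M)).trace + b^2*(M*(M*(M*M))).trace) := by
    rw [hkey]
    rw [smul_mul_smul_comm]
    rw [Matrix.trace_smul]
    simp only [add_mul, mul_add, one_mul, mul_one, smul_mul_assoc, mul_smul_comm,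
      smul_smul, mul_assoc, Matrix.trace_add, Matrix.trace_smul, smul_eq_mul,
      Matrix.trace_one, Fintype.card_fin]
    ring
  clear_value F B M p2 a b β
  -- trace values and bounds
  have hT1 : M.trace = α * normXE := by
    rw [hMdef, Matrix.trace_mul_comm, hbdry]
  have hT2 : (M*M).trace = normXE^2 := by
    have h2 := hMA 2
    rw [pow_two, pow_two] at h2
    rw [h2, ← hp2def, hw2]
  have hT3 : (M*(M*M)).trace ≤ normXE^3 := by
    have h3 := hMA 3
    rw [show M^3 = M*(M*M) from by noncomm_ring,
        show B^3 = B*(B*B) from by noncomm_ring] at h3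
    have hcs := trace_pow3_sq_le B hBT
    rw [← hp2def] at hcs
    have hpow : (normXE^3)^2 = p2^3 := by rw [← hw2]; ring
    have hw3 : 0 < normXE^3 := pow_pos hw0 3
    rw [h3]
    nlinarith [hcs, hpow, hw3, sq_nonneg ((B*(B*B)).trace - normXE^3)]
  have hT4 : (M*(M*(M*M))).trace ≤ normXE^4 := by
    have h4 := hMA 4
    rw [show M^4 = M*(M*(M*M)) from by noncomm_ring,
        show B^4 = (B*B)*(B*B) from by noncomm_ring] at h4
    have hb4 := trace_pow4_le B hBT
    rw [← hp2def] at hb4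
    have h44 : normXE^4 = p2^2 := by rw [← hw2]; ring
    rw [h4, h44]
    exact hb4
  -- sign facts
  have ha0 : a ≤ 0 := by rw [hadef]; linarith
  have hb0 : b ≤ 0 := by
    rw [hbdef]
    have : 0 < t * (α / normXE) := mul_pos ht0 (div_pos hα0 hw0)
    linarith
  have hab : 0 ≤ a * b := by
    rw [← neg_mul_neg]
    exact mul_nonneg (neg_nonneg.2 ha0) (neg_nonneg.2 hb0)
  have haw : a * normXE = t * normXE - α := by rw [hadef]; field_simp
  have hbw : b * normXE = -(t*α) := by rw [hbdef]; field_simp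
  have hsα : t * normXE ≤ α := (le_div_iff₀ hw0).mp ht
  -- reduce goal
  rw [hq]
  have hβ2 : (0:ℝ) < β^2 := pow_pos hβ 2
  rw [show (1/β)^2 * ((n:ℝ) + 2*a*M.trace + (a^2+2*b)*(M*M).trace
          + 2*(a*b)*(M*(M*M)).trace + b^2*(M*(M*(M*M))).trace)
      = ((n:ℝ) + 2*a*M.trace + (a^2+2*b)*(M*M).trace
          + 2*(a*b)*(M*(M*M)).trace + b^2*(M*(M*(M*M))).trace)/β^2 from by ring]
  have hRrw : (1/β) * (1 - 2*t*((1-α)/β)*normXE*(α - t*normXE))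
      = (β - 2*t*(1-α)*normXE*(α - t*normXE))/β^2 := by
    have hβne : β ≠ 0 := ne_of_gt hβ
    field_simp
  rw [hRrw, div_lt_div_iff_of_pos_right hβ2, hT1, hT2, hβdef]
  exact final_ineq n α t normXE a b _ _ hn1 hα0 hα1 hw0 ht0 haw hbw hT3 hT4 hab hsα
end

section
/- Let e ∈ ℝ^n with ‖e‖ = √n, and let x ∈ ℝ^n satisfy eᵀx ≥ √(n−1)·‖x‖ with x ≠ 0. Then the point x̄ := (eᵀx/‖x‖²)·x satisfies ‖x̄ − e‖ ≤ 1. In particular, x̄ lies in the closed unit ball centered at e, and hence the cone K_e(√(n−1)) is contained in the cone generated by the closed unit ball around e. -/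
theorem stmt_15 (n : ℕ) (e : EuclideanSpace ℝ (Fin n))
    (he : ‖e‖ = Real.sqrt n) :
    (∀ x : EuclideanSpace ℝ (Fin n), x ≠ 0 →
      (inner ℝ e x : ℝ) ≥ Real.sqrt ((n : ℝ) - 1) * ‖x‖ →
      ‖(((inner ℝ e x : ℝ) / ‖x‖ ^ 2) • x) - e‖ ≤ 1) ∧
    {x : EuclideanSpace ℝ (Fin n) |
        (inner ℝ e x : ℝ) ≥ Real.sqrt ((n : ℝ) - 1) * ‖x‖} ⊆
      {y : EuclideanSpace ℝ (Fin n) |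
        ∃ t : ℝ, 0 ≤ t ∧ ∃ z ∈ Metric.closedBall e 1, y = t • z} := by
  have key : ∀ x : EuclideanSpace ℝ (Fin n), x ≠ 0 →
      (inner ℝ e x : ℝ) ≥ Real.sqrt ((n : ℝ) - 1) * ‖x‖ →
      ‖(((inner ℝ e x : ℝ) / ‖x‖ ^ 2) • x) - e‖ ≤ 1 := by
    intro x hx h
    rcases Nat.eq_zero_or_pos n with hn | hn
    · subst hn
      exact absurd (Subsingleton.elim x 0) hx
    have hr : (0:ℝ) < ‖x‖ := norm_pos_iff.mpr hx
    set a : ℝ := (inner ℝ e x : ℝ) with ha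
    have hnn : (0:ℝ) ≤ (n:ℝ) - 1 := by
      have : (1:ℝ) ≤ n := by exact_mod_cast hn
      linarith
    have ha0 : (0:ℝ) ≤ a := le_trans (by positivity) h
    have ha2 : ((n:ℝ) - 1) * ‖x‖ ^ 2 ≤ a ^ 2 := by
      have hms := mul_self_le_mul_self (by positivity : (0:ℝ) ≤ Real.sqrt ((n:ℝ)-1) * ‖x‖) h
      nlinarith [Real.sq_sqrt hnn]
    have hne : (‖x‖:ℝ) ^ 2 ≠ 0 := by positivity
    have hE : ‖e‖ ^ 2 = (n:ℝ) := by
      rw [he, Real.sq_sqrt (by positivity)]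
    have hsq : ‖((a / ‖x‖ ^ 2) • x) - e‖ ^ 2 ≤ 1 := by
      have expand : ‖((a / ‖x‖ ^ 2) • x) - e‖ ^ 2
          = ‖(a / ‖x‖ ^ 2) • x‖ ^ 2 - 2 * (inner ℝ ((a / ‖x‖ ^ 2) • x) e : ℝ)
            + ‖e‖ ^ 2 := norm_sub_sq_real _ _
      have h1 : (inner ℝ ((a / ‖x‖ ^ 2) • x) e : ℝ) = (a / ‖x‖ ^ 2) * a := by
        rw [real_inner_smul_left, real_inner_comm]
      have h2 : ‖(a / ‖x‖ ^ 2) • x‖ ^ 2 = (a / ‖x‖ ^ 2) ^ 2 * ‖x‖ ^ 2 := by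
        rw [norm_smul]
        rw [Real.norm_eq_abs, mul_pow, sq_abs]
      have hdiv : (a / ‖x‖ ^ 2) ^ 2 * ‖x‖ ^ 2 - 2 * ((a / ‖x‖ ^ 2) * a)
          = - (a ^ 2 / ‖x‖ ^ 2) := by field_simp; ring
      have hfin : ((n:ℝ) - 1) ≤ a ^ 2 / ‖x‖ ^ 2 :=
        (le_div_iff₀ (by positivity)).mpr ha2
      rw [expand, h1, h2, hE]
      linarith [hdiv]
    nlinarith [norm_nonneg (((a / ‖x‖ ^ 2) • x) - e), hsq]
  refine ⟨key, ?_⟩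
  intro x hxs
  simp only [Set.mem_setOf_eq] at hxs ⊢
  by_cases hx : x = 0
  · exact ⟨0, le_refl 0, e, Metric.mem_closedBall_self (by norm_num), by simp [hx]⟩
  have hr : (0:ℝ) < ‖x‖ := norm_pos_iff.mpr hx
  have ha0 : (0:ℝ) ≤ (inner ℝ e x : ℝ) := le_trans (by positivity) hxs
  rcases ha0.lt_or_eq with hpos | hzero
  · refine ⟨‖x‖ ^ 2 / (inner ℝ e x : ℝ), by positivity,
      ((inner ℝ e x : ℝ) / ‖x‖ ^ 2) • x, ?_, ?_⟩
    · rw [Metric.mem_closedBall, dist_eq_norm]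
      exact key x hx hxs
    · rw [smul_smul]
      have : ‖x‖ ^ 2 / (inner ℝ e x : ℝ) * ((inner ℝ e x : ℝ) / ‖x‖ ^ 2) = 1 := by
        rw [div_mul_div_comm, mul_comm (‖x‖ ^ 2),
          div_self (mul_ne_zero (ne_of_gt hpos) (by positivity))]
      rw [this, one_smul]
  · exfalso
    have hs0 : Real.sqrt ((n:ℝ) - 1) * ‖x‖ ≤ 0 := by
      rw [← hzero] at hxs; exact hxs
    have hs : Real.sqrt ((n:ℝ) - 1) ≤ 0 := by
      by_contra hc
      push_neg at hc
      nlinarith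
    have hn1 : (n:ℝ) - 1 ≤ 0 := by
      exact (Real.sqrt_eq_zero' (x := (n:ℝ) - 1)).mp
        (le_antisymm hs (Real.sqrt_nonneg _))
    have hn : n ≤ 1 := by exact_mod_cast (by linarith : (n:ℝ) ≤ 1)
    interval_cases n
    · exact hx (Subsingleton.elim x 0)
    · have he1 : ‖e‖ = 1 := by simpa using he
      have hene : e ≠ 0 := by
        intro h0; rw [h0, norm_zero] at he1; norm_num at he1
      have he0 : e 0 ≠ 0 := by
        intro h0
        apply hene
        ext i
        have : i = 0 := Subsingleton.elim i 0
        rw [this, h0]; rfl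
      have hx0 : x 0 ≠ 0 := by
        intro h0
        apply hx
        ext i
        have : i = 0 := Subsingleton.elim i 0
        rw [this, h0]; rfl
      have : (inner ℝ e x : ℝ) = e 0 * x 0 := by
        simp [PiLp.inner_apply, RCLike.inner_apply, Fin.sum_univ_one, mul_comm]
      rw [this] at hzero
      exact (mul_ne_zero he0 hx0) hzero.symm
end

section
/- Let e ∈ ℝ^n with ‖e‖ = √n, 0 < β ≤ α < √n, and let L ⊆ ℝ^n be a subspace with e ∉ L. Suppose s̄ lies in the interior of K_e(β)* = K_e(√(n−β²)), s̄ ∉ L^⊥, and x̄ minimizes x ↦ s̄ᵀx over (e + L) ∩ K_e(α). Then there exists s̄′ ∈ (s̄ + L^⊥) ∩ K_e(α)* with eᵀ(s̄ − s̄′) ≥ C₁·C₂·‖s̄‖, where C₁ = ( (n−α²)·‖x̄‖²·(1−(β/α)²) / (n−α² + (‖x̄‖−α)²·(1−(β/α)²)) )^{1/2} and C₂ = (1/n)·(α·√(n−β²) − β·√(n−α²)). -/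
open RealInnerProductSpace

-- Farkas-type lemma in 1D over a subspace
lemma aux_farkas (n : ℕ) (L : Submodule ℝ (EuclideanSpace ℝ (Fin n)))
    (w s : EuclideanSpace ℝ (Fin n)) (hw : w ∉ Lᗮ)
    (H : ∀ d ∈ L, 0 < ⟪w, d⟫ → 0 ≤ ⟪s, d⟫) :
    ∃ l : ℝ, 0 ≤ l ∧ s - l • w ∈ Lᗮ := by
  set u : EuclideanSpace ℝ (Fin n) := (Submodule.orthogonalProjectionOnto L w : EuclideanSpace ℝ (Fin n)) with hu_def
  set v : EuclideanSpace ℝ (Fin n) := (Submodule.orthogonalProjectionOnto L s : EuclideanSpace ℝ (Fin n)) with hv_def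
  have huL : u ∈ L := (Submodule.orthogonalProjectionOnto L w).2
  have hvL : v ∈ L := (Submodule.orthogonalProjectionOnto L s).2
  have hwu : ∀ d ∈ L, ⟪w, d⟫ = ⟪u, d⟫ := by
    intro d hd
    have h1 : w - u ∈ Lᗮ := Submodule.sub_starProjection_mem_orthogonal (K := L) w
    have h2 : ⟪d, w - u⟫ = 0 := h1 d hd
    rw [inner_sub_right] at h2
    have := real_inner_comm w d
    have := real_inner_comm u d
    linarith [real_inner_comm w d, real_inner_comm u d]
  have hsv : ∀ d ∈ L, ⟪s, d⟫ = ⟪v, d⟫ := by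
    intro d hd
    have h1 : s - v ∈ Lᗮ := Submodule.sub_starProjection_mem_orthogonal (K := L) s
    have h2 : ⟪d, s - v⟫ = 0 := h1 d hd
    rw [inner_sub_right] at h2
    linarith [real_inner_comm s d, real_inner_comm v d]
  have hu0 : u ≠ 0 := by
    intro h
    apply hw
    rw [← Submodule.orthogonalProjectionOnto_eq_zero_iff (K := L)]
    exact Subtype.ext h
  have huu : 0 < ⟪u, u⟫ := by
    rw [real_inner_self_eq_norm_sq]
    exact pow_pos (norm_pos_iff.mpr hu0) 2
  set l : ℝ := ⟪v, u⟫ / ⟪u, u⟫ with hl_def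
  have hl0 : 0 ≤ l := by
    have := H u huL (by rw [hwu u huL]; exact huu)
    rw [hsv u huL] at this
    exact div_nonneg this huu.le
  set w' : EuclideanSpace ℝ (Fin n) := v - l • u with hw'_def
  have hw'L : w' ∈ L := L.sub_mem hvL (L.smul_mem l huL)
  have huw' : ⟪u, w'⟫ = 0 := by
    rw [hw'_def, inner_sub_right, real_inner_smul_right, hl_def,
      div_mul_cancel₀ _ (ne_of_gt huu), real_inner_comm]
    ring
  have hw'0 : w' = 0 := by
    by_contra h
    have hww' : 0 < ⟪w', w'⟫ := by
      rw [real_inner_self_eq_norm_sq]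
      exact pow_pos (norm_pos_iff.mpr h) 2
    set ε : ℝ := ⟪w', w'⟫ / (|⟪v, u⟫| + 1) with hε_def
    have hε0 : 0 < ε := div_pos hww' (by positivity)
    set d : EuclideanSpace ℝ (Fin n) := ε • u - w' with hd_def
    have hdL : d ∈ L := L.sub_mem (L.smul_mem ε huL) hw'L
    have hud : ⟪w, d⟫ = ε * ⟪u, u⟫ := by
      rw [hwu d hdL, hd_def, inner_sub_right, real_inner_smul_right, huw']
      ring
    have hvd : ⟪v, d⟫ = ε * ⟪v, u⟫ - ⟪w', w'⟫ := by
      rw [hd_def, inner_sub_right, real_inner_smul_right]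
      have : ⟪v, w'⟫ = ⟪w', w'⟫ := by
        have : v = w' + l • u := by rw [hw'_def]; abel
        rw [this, inner_add_left, real_inner_smul_left, huw']
        ring
      rw [this]
    have hεvu : ε * ⟪v, u⟫ < ⟪w', w'⟫ := by
      calc ε * ⟪v, u⟫ ≤ ε * |⟪v, u⟫| := by
            exact mul_le_mul_of_nonneg_left (le_abs_self _) hε0.le
        _ < ε * (|⟪v, u⟫| + 1) := by nlinarith
        _ = ⟪w', w'⟫ := by rw [hε_def]; field_simp
    have := H d hdL (by rw [hud]; positivity)
    rw [hsv d hdL, hvd] at this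
    linarith
  have hvl : v = l • u := by
    have : v - l • u = 0 := hw'0
    linear_combination (norm := module) this
  refine ⟨l, hl0, ?_⟩
  intro d hd
  have : ⟪s - l • w, d⟫ = 0 := by
    rw [inner_sub_left, real_inner_smul_left, hsv d hd, hwu d hd, hvl, real_inner_smul_left]
    ring
  rw [real_inner_comm] at this
  exact this

lemma aux_sq_le (P Q : ℝ) (hP : 0 ≤ P) (hQ : 0 ≤ Q) (h : P^2 ≤ Q^2) : P ≤ Q := by nlinarith

set_option maxHeartbeats 1000000 in
lemma aux_angle (n : ℕ) (e s x : EuclideanSpace ℝ (Fin n)) (α β : ℝ)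
    (hn : 0 < (n:ℝ)) (hee : ⟪e, e⟫ = (n:ℝ)) (hβ : 0 ≤ β) (hα : 0 ≤ α)
    (hβn : β^2 ≤ (n:ℝ)) (hαn : α^2 ≤ (n:ℝ))
    (hs : Real.sqrt ((n:ℝ) - β^2) * ‖s‖ ≤ ⟪e, s⟫)
    (hx : α * ‖x‖ ≤ ⟪e, x⟫) :
    (1/(n:ℝ)) * (α * Real.sqrt ((n:ℝ) - β^2) - β * Real.sqrt ((n:ℝ) - α^2)) * (‖s‖ * ‖x‖)
      ≤ ⟪s, x⟫ := by
  set a : ℝ := Real.sqrt ((n:ℝ) - β^2) with ha_def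
  set b : ℝ := Real.sqrt ((n:ℝ) - α^2) with hb_def
  have ha2 : a^2 = (n:ℝ) - β^2 := Real.sq_sqrt (by linarith)
  have hb2 : b^2 = (n:ℝ) - α^2 := Real.sq_sqrt (by linarith)
  have ha0 : 0 ≤ a := Real.sqrt_nonneg _
  have hb0 : 0 ≤ b := Real.sqrt_nonneg _
  set N : ℝ := ‖s‖ with hN_def
  set X : ℝ := ‖x‖ with hX_def
  have hN0 : 0 ≤ N := norm_nonneg _
  have hX0 : 0 ≤ X := norm_nonneg _
  set cs : ℝ := ⟪e, s⟫ with hcs_def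
  set cx : ℝ := ⟪e, x⟫ with hcx_def
  have hcs0 : 0 ≤ cs := le_trans (by positivity) hs
  have hcx0 : 0 ≤ cx := le_trans (by positivity) hx
  set s' : EuclideanSpace ℝ (Fin n) := s - (cs/(n:ℝ)) • e with hs'_def
  set x' : EuclideanSpace ℝ (Fin n) := x - (cx/(n:ℝ)) • e with hx'_def
  have hse : ⟪s, e⟫ = cs := real_inner_comm e s
  have hxe : ⟪x, e⟫ = cx := real_inner_comm e x
  have key1 : ⟪s, x⟫ = ⟪s', x'⟫ + cs * cx / (n:ℝ) := by
    rw [hs'_def, hx'_def]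
    simp only [inner_sub_left, inner_sub_right, real_inner_smul_left, real_inner_smul_right]
    rw [hee, hse, ← hcx_def]
    field_simp
    try ring
  have hs'n : ‖s'‖^2 = N^2 - cs^2/(n:ℝ) := by
    rw [← real_inner_self_eq_norm_sq, hs'_def]
    simp only [inner_sub_left, inner_sub_right, real_inner_smul_left, real_inner_smul_right]
    rw [hee, hse, ← hcs_def, real_inner_self_eq_norm_sq, ← hN_def]
    field_simp
    ring
  have hx'n : ‖x'‖^2 = X^2 - cx^2/(n:ℝ) := by
    rw [← real_inner_self_eq_norm_sq, hx'_def]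
    simp only [inner_sub_left, inner_sub_right, real_inner_smul_left, real_inner_smul_right]
    rw [hee, hxe, ← hcx_def, real_inner_self_eq_norm_sq, ← hX_def]
    field_simp
    ring
  have hcs2 : ((n:ℝ) - β^2) * N^2 ≤ cs^2 := by
    nlinarith [mul_le_mul hs hs (by positivity : (0:ℝ) ≤ a * N) hcs0, ha2]
  have hcx2 : α^2 * X^2 ≤ cx^2 := by
    nlinarith [mul_le_mul hx hx (by positivity : (0:ℝ) ≤ α * X) hcx0]
  have h1 : ‖s'‖^2 ≤ β^2 * N^2 / n := by
    rw [hs'n]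
    have e1 : N^2 - ((n:ℝ)-β^2)*N^2/n = β^2*N^2/n := by field_simp; ring
    have e2 : ((n:ℝ)-β^2)*N^2/n ≤ cs^2/n := by gcongr
    linarith
  have h2 : ‖x'‖^2 ≤ b^2 * X^2 / n := by
    rw [hx'n, hb2]
    have e1 : X^2 - α^2*X^2/n ≤ ((n:ℝ)-α^2)*X^2/n := by
      have : X^2 - α^2*X^2/n = ((n:ℝ)-α^2)*X^2/n := by field_simp
      linarith
    have e2 : α^2*X^2/n ≤ cx^2/n := by gcongr
    linarith
  have hP : ‖s'‖ * ‖x'‖ ≤ β * b * N * X / (n:ℝ) := by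
    apply aux_sq_le _ _ (by positivity) (by positivity)
    calc (‖s'‖ * ‖x'‖)^2 = ‖s'‖^2 * ‖x'‖^2 := by ring
      _ ≤ (β^2 * N^2 / n) * (b^2 * X^2 / n) := by
          apply mul_le_mul h1 h2 (by positivity) (by positivity)
      _ = (β * b * N * X / n)^2 := by ring
  have hcauchy : -(‖s'‖ * ‖x'‖) ≤ ⟪s', x'⟫ := by
    have h := abs_real_inner_le_norm s' x'
    rw [abs_le] at h
    exact h.1
  have hcscx : (a * N) * (α * X) ≤ cs * cx :=
    mul_le_mul hs hx (by positivity) hcs0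
  have h3 : (a * N) * (α * X) / n ≤ cs * cx / n := by gcongr
  rw [key1]
  have e3 : (1/(n:ℝ)) * (α * a - β * b) * (N * X)
      = (a*N)*(α*X)/n - β*b*N*X/n := by field_simp
  linarith [hP, hcauchy, h3]

set_option maxHeartbeats 1000000 in
/-- At the optimum, the cone constraint is active (otherwise `sbar ∈ Lᗮ`). -/
lemma aux_boundary (n : ℕ) (e : EuclideanSpace ℝ (Fin n)) (α : ℝ) (hα0 : 0 < α)
    (L : Submodule ℝ (EuclideanSpace ℝ (Fin n)))
    (sbar xbar : EuclideanSpace ℝ (Fin n))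
    (hsL : sbar ∉ Lᗮ)
    (hfeas1 : xbar - e ∈ L) (hfeas2 : (inner ℝ e xbar : ℝ) ≥ α * ‖xbar‖)
    (hxopt : ∀ x : EuclideanSpace ℝ (Fin n),
      x - e ∈ L → (inner ℝ e x : ℝ) ≥ α * ‖x‖ →
      (inner ℝ sbar xbar : ℝ) ≤ (inner ℝ sbar x : ℝ)) :
    ⟪e, xbar⟫ = α * ‖xbar‖ := by
  set r : ℝ := ‖xbar‖ with hr_def
  by_contra h
  have hgt : α * r < ⟪e, xbar⟫ := lt_of_le_of_ne hfeas2 (Ne.symm h)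
  apply hsL
  rw [Submodule.mem_orthogonal]
  intro d hd
  set ε : ℝ := ⟪e, xbar⟫ - α * r with hε_def
  have hε : 0 < ε := by rw [hε_def]; linarith
  have hden : 0 < α * ‖d‖ + |⟪e, d⟫| + 1 := by positivity
  set t : ℝ := ε / (α * ‖d‖ + |⟪e, d⟫| + 1) with ht_def
  have ht : 0 < t := div_pos hε hden
  have key : ∀ c : ℝ, |c| ≤ t → ⟪sbar, xbar⟫ ≤ ⟪sbar, xbar + c • d⟫ := by
    intro c hc
    apply hxopt
    · have hrw : xbar + c • d - e = (xbar - e) + c • d := by abel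
      rw [hrw]
      exact L.add_mem hfeas1 (L.smul_mem c hd)
    · have h1 : ‖xbar + c • d‖ ≤ r + |c| * ‖d‖ := by
        calc ‖xbar + c • d‖ ≤ ‖xbar‖ + ‖c • d‖ := norm_add_le _ _
          _ = r + |c| * ‖d‖ := by rw [norm_smul, Real.norm_eq_abs]
      have h2 : ⟪e, xbar + c • d⟫ = ⟪e, xbar⟫ + c * ⟪e, d⟫ := by
        rw [inner_add_right, real_inner_smul_right]
      have h3 : -(|c| * |⟪e, d⟫|) ≤ c * ⟪e, d⟫ := by
        rw [← abs_mul]; exact neg_abs_le _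
      have h4 : t * (α * ‖d‖ + |⟪e, d⟫|) ≤ ε := by
        rw [ht_def, div_mul_eq_mul_div, div_le_iff₀ hden]
        nlinarith [abs_nonneg (⟪e, d⟫ : ℝ), norm_nonneg d, hε.le]
      have h5 : α * (r + |c| * ‖d‖) ≤ ⟪e, xbar⟫ + c * ⟪e, d⟫ := by
        have hnn : |c| * |⟪e, d⟫| ≤ t * |⟪e, d⟫| :=
          mul_le_mul_of_nonneg_right hc (abs_nonneg _)
        have hcc : α * (|c| * ‖d‖) ≤ α * (t * ‖d‖) :=
          mul_le_mul_of_nonneg_left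
            (mul_le_mul_of_nonneg_right hc (norm_nonneg _)) hα0.le
        have hεdef : ε = ⟪e, xbar⟫ - α * r := hε_def
        nlinarith [h3, h4, hnn, hcc]
      calc α * ‖xbar + c • d‖ ≤ α * (r + |c| * ‖d‖) :=
            mul_le_mul_of_nonneg_left h1 hα0.le
        _ ≤ ⟪e, xbar⟫ + c * ⟪e, d⟫ := h5
        _ = ⟪e, xbar + c • d⟫ := h2.symm
  have k1 := key t (by rw [abs_of_nonneg ht.le])
  have k2 := key (-t) (by rw [abs_neg, abs_of_nonneg ht.le])
  rw [inner_add_right, real_inner_smul_right] at k1 k2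
  have h6 : t * ⟪sbar, d⟫ = 0 := le_antisymm (by linarith) (by linarith)
  have h7 : ⟪sbar, d⟫ = 0 := (mul_eq_zero.mp h6).resolve_left (ne_of_gt ht)
  rw [real_inner_comm]
  exact h7

set_option maxHeartbeats 1000000 in
/-- First-order optimality: moving into the interior of the cone cannot decrease `⟪sbar, ·⟫`. -/
lemma aux_H (n : ℕ) (e : EuclideanSpace ℝ (Fin n)) (α : ℝ) (hα0 : 0 < α)
    (L : Submodule ℝ (EuclideanSpace ℝ (Fin n)))
    (sbar xbar : EuclideanSpace ℝ (Fin n))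
    (hr : 0 < ‖xbar‖)
    (hfeas1 : xbar - e ∈ L)
    (hbd : ⟪e, xbar⟫ = α * ‖xbar‖)
    (hxopt : ∀ x : EuclideanSpace ℝ (Fin n),
      x - e ∈ L → (inner ℝ e x : ℝ) ≥ α * ‖x‖ →
      (inner ℝ sbar xbar : ℝ) ≤ (inner ℝ sbar x : ℝ)) :
    ∀ d ∈ L, 0 < ⟪e - (α / ‖xbar‖) • xbar, d⟫ → 0 ≤ ⟪sbar, d⟫ := by
  set r : ℝ := ‖xbar‖ with hr_def
  have hrne : r ≠ 0 := ne_of_gt hr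
  intro d hd hwd
  rw [inner_sub_left, real_inner_smul_left] at hwd
  set c : ℝ := ⟪e, d⟫ with hc_def
  set δ : ℝ := r * c - α * ⟪xbar, d⟫ with hδ_def
  have hδ : 0 < δ := by
    have hmul : r * ((α / r) * ⟪xbar, d⟫) = α * ⟪xbar, d⟫ := by
      field_simp
    have h := mul_pos hr hwd
    rw [mul_sub, hmul] at h
    rw [hδ_def]
    linarith
  set t : ℝ := min (α * δ / (α^2 * ‖d‖^2 + 1)) (α * r / (|c| + 1)) with ht_def
  have ht : 0 < t := lt_min (by positivity) (by positivity)
  have ht1 : t ≤ α * δ / (α^2 * ‖d‖^2 + 1) := min_le_left _ _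
  have ht2 : t ≤ α * r / (|c| + 1) := min_le_right _ _
  have hrhs0 : 0 ≤ α * r + t * c := by
    have e1 : t * |c| ≤ (α * r / (|c| + 1)) * |c| :=
      mul_le_mul_of_nonneg_right ht2 (abs_nonneg _)
    have e2 : (α * r / (|c| + 1)) * |c| ≤ α * r := by
      rw [div_mul_eq_mul_div, div_le_iff₀ (by positivity)]
      nlinarith [abs_nonneg c, mul_pos hα0 hr]
    have e3 : -(t * c) ≤ t * |c| := by
      nlinarith [mul_le_mul_of_nonneg_left (neg_le_abs c) ht.le]
    linarith
  have hnormsq : ‖xbar + t • d‖^2 = r^2 + 2 * t * ⟪xbar, d⟫ + t^2 * ‖d‖^2 := by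
    rw [norm_add_sq_real, norm_smul, real_inner_smul_right, Real.norm_eq_abs,
      abs_of_nonneg ht.le]
    ring
  have hsq : (α * ‖xbar + t • d‖)^2 ≤ (α * r + t * c)^2 := by
    have e4 : t * (α^2 * ‖d‖^2) ≤ α * δ := by
      have e5 : (α * δ / (α^2 * ‖d‖^2 + 1)) * (α^2 * ‖d‖^2) ≤ α * δ := by
        rw [div_mul_eq_mul_div, div_le_iff₀ (by positivity)]
        nlinarith [mul_nonneg hα0.le hδ.le, sq_nonneg (α * ‖d‖)]
      have e5' := mul_le_mul_of_nonneg_right ht1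
        (by positivity : (0:ℝ) ≤ α^2 * ‖d‖^2)
      exact le_trans e5' e5
    have e6 : (α * r + t * c)^2 - (α * ‖xbar + t • d‖)^2
        = 2 * t * α * δ + t^2 * c^2 - t^2 * α^2 * ‖d‖^2 := by
      rw [hδ_def]
      linear_combination (-(α^2)) * hnormsq
    nlinarith [mul_le_mul_of_nonneg_left e4 ht.le, sq_nonneg (t * c),
      mul_nonneg ht.le (mul_nonneg hα0.le hδ.le)]
  have hcone : α * ‖xbar + t • d‖ ≤ ⟪e, xbar + t • d⟫ := by
    have hval : ⟪e, xbar + t • d⟫ = α * r + t * c := by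
      rw [inner_add_right, real_inner_smul_right, hbd, hc_def]
    rw [hval]
    exact aux_sq_le _ _ (by positivity) hrhs0 hsq
  have hmem : xbar + t • d - e ∈ L := by
    have hrw : xbar + t • d - e = (xbar - e) + t • d := by abel
    rw [hrw]
    exact L.add_mem hfeas1 (L.smul_mem t hd)
  have hop := hxopt (xbar + t • d) hmem hcone
  rw [inner_add_right, real_inner_smul_right] at hop
  nlinarith [hop, ht]

set_option maxHeartbeats 1000000 in
theorem stmt_18 (n : ℕ) (e : EuclideanSpace ℝ (Fin n))
    (he : ‖e‖ = Real.sqrt n) (α β : ℝ)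
    (hβ0 : 0 < β) (hβα : β ≤ α) (hαn : α < Real.sqrt n)
    (L : Submodule ℝ (EuclideanSpace ℝ (Fin n))) (heL : e ∉ L)
    (sbar : EuclideanSpace ℝ (Fin n))
    (hsint : sbar ∈ interior {s : EuclideanSpace ℝ (Fin n) |
      (inner ℝ e s : ℝ) ≥ Real.sqrt ((n : ℝ) - β ^ 2) * ‖s‖})
    (hsL : sbar ∉ Lᗮ)
    (xbar : EuclideanSpace ℝ (Fin n))
    (hxfeas : xbar - e ∈ L ∧ (inner ℝ e xbar : ℝ) ≥ α * ‖xbar‖)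
    (hxopt : ∀ x : EuclideanSpace ℝ (Fin n),
      x - e ∈ L → (inner ℝ e x : ℝ) ≥ α * ‖x‖ →
      (inner ℝ sbar xbar : ℝ) ≤ (inner ℝ sbar x : ℝ)) :
    ∃ sbar' : EuclideanSpace ℝ (Fin n),
      sbar' - sbar ∈ Lᗮ ∧
      (inner ℝ e sbar' : ℝ) ≥ Real.sqrt ((n : ℝ) - α ^ 2) * ‖sbar'‖ ∧
      (inner ℝ e (sbar - sbar') : ℝ) ≥
        Real.sqrt (((n : ℝ) - α ^ 2) * ‖xbar‖ ^ 2 * (1 - (β / α) ^ 2) /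
            ((n : ℝ) - α ^ 2 + (‖xbar‖ - α) ^ 2 * (1 - (β / α) ^ 2))) *
          ((1 / (n : ℝ)) * (α * Real.sqrt ((n : ℝ) - β ^ 2)
            - β * Real.sqrt ((n : ℝ) - α ^ 2))) * ‖sbar‖ := by
  have hα0 : 0 < α := lt_of_lt_of_le hβ0 hβα
  have hn : (0:ℝ) < n := Real.sqrt_pos.mp (lt_of_le_of_lt hα0.le hαn)
  have hee : ⟪e, e⟫ = (n:ℝ) := by
    rw [real_inner_self_eq_norm_sq, he, Real.sq_sqrt hn.le]
  have hα2 : α^2 < (n:ℝ) := (Real.lt_sqrt hα0.le).mp hαn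
  have hβ2 : β^2 ≤ (n:ℝ) := le_trans (by nlinarith) hα2.le
  have hx0 : xbar ≠ 0 := by
    intro h
    apply heL
    have h1 := hxfeas.1
    rw [h, zero_sub] at h1
    simpa using L.neg_mem h1
  have hs_cone : Real.sqrt ((n:ℝ) - β^2) * ‖sbar‖ ≤ ⟪e, sbar⟫ := by
    have h : sbar ∈ {s : EuclideanSpace ℝ (Fin n) |
        (inner ℝ e s : ℝ) ≥ Real.sqrt ((n : ℝ) - β ^ 2) * ‖s‖} := interior_subset hsint
    exact h
  set r : ℝ := ‖xbar‖ with hr_def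
  have hr : 0 < r := norm_pos_iff.mpr hx0
  have hrne : r ≠ 0 := ne_of_gt hr
  have hbd : ⟪e, xbar⟫ = α * r :=
    aux_boundary n e α hα0 L sbar xbar hsL hxfeas.1 hxfeas.2 hxopt
  set w : EuclideanSpace ℝ (Fin n) := e - (α / r) • xbar with hw_def
  have hxx : ⟪xbar, xbar⟫ = r^2 := real_inner_self_eq_norm_sq xbar
  have hxe' : ⟪xbar, e⟫ = α * r := by rw [real_inner_comm]; exact hbd
  have hwd_eval : ∀ d : EuclideanSpace ℝ (Fin n),
      ⟪w, d⟫ = ⟪e, d⟫ - (α / r) * ⟪xbar, d⟫ := by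
    intro d
    rw [hw_def, inner_sub_left, real_inner_smul_left]
  have hwL : w ∉ Lᗮ := by
    intro hw
    have h1 : ⟪xbar - e, w⟫ = 0 := hw (xbar - e) hxfeas.1
    have h2 : ⟪w, xbar - e⟫ = 0 := by rw [real_inner_comm]; exact h1
    rw [hwd_eval, inner_sub_right, inner_sub_right, hbd, hee, hxx, hxe'] at h2
    have h3 : r * (α * r - (n:ℝ) - α / r * (r ^ 2 - α * r)) = r * 0 := by rw [h2]
    rw [mul_zero] at h3
    field_simp at h3
    nlinarith [hα2, hr]
  have H : ∀ d ∈ L, 0 < ⟪w, d⟫ → 0 ≤ ⟪sbar, d⟫ :=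
    aux_H n e α hα0 L sbar xbar hr hxfeas.1 hbd hxopt
  obtain ⟨l, hl0, hlmem⟩ := aux_farkas n L w sbar hwL H
  have hew : ⟪e, w⟫ = (n:ℝ) - α^2 := by
    rw [hw_def, inner_sub_right, real_inner_smul_right, hee, hbd]
    field_simp
  have hxw : ⟪xbar, w⟫ = 0 := by
    rw [hw_def, inner_sub_right, real_inner_smul_right, hxe', hxx]
    field_simp
    ring
  have hww : ⟪w, w⟫ = (n:ℝ) - α^2 := by
    nth_rewrite 2 [hw_def]
    rw [inner_sub_right, real_inner_smul_right, real_inner_comm e w, hew,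
      real_inner_comm xbar w, hxw]
    ring
  have hnw2 : ‖w‖^2 = (n:ℝ) - α^2 := by
    rw [← real_inner_self_eq_norm_sq]; exact hww
  refine ⟨l • w, ?_, ?_, ?_⟩
  · have hneg := Lᗮ.neg_mem hlmem
    simpa [neg_sub] using hneg
  · have h1 : ⟪e, l • w⟫ = l * ((n:ℝ) - α^2) := by
      rw [real_inner_smul_right, hew]
    have h2 : ‖l • w‖ = l * Real.sqrt ((n:ℝ) - α^2) := by
      rw [norm_smul, Real.norm_eq_abs, abs_of_nonneg hl0]
      congr 1
      rw [show ‖w‖ = Real.sqrt (‖w‖^2) from (Real.sqrt_sq (norm_nonneg w)).symm, hnw2]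
    rw [ge_iff_le, h1, h2]
    have h3 : Real.sqrt ((n:ℝ) - α^2)^2 = (n:ℝ) - α^2 := Real.sq_sqrt (by linarith)
    nlinarith [h3]
  · have h0 : ⟪xbar - e, sbar - l • w⟫ = 0 := hlmem (xbar - e) hxfeas.1
    have gap_eq : ⟪e, sbar - l • w⟫ = ⟪sbar, xbar⟫ := by
      have h4 : ⟪xbar, sbar - l • w⟫ = ⟪e, sbar - l • w⟫ := by
        rw [inner_sub_left] at h0; linarith
      rw [← h4, inner_sub_right, real_inner_smul_right, hxw, real_inner_comm]
      ring
    have hangle := aux_angle n e sbar xbar α β hn hee hβ0.le hα0.le hβ2 hα2.le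
      hs_cone hxfeas.2
    set a : ℝ := Real.sqrt ((n:ℝ) - β^2) with ha_def
    set b : ℝ := Real.sqrt ((n:ℝ) - α^2) with hb_def
    have hba : b ≤ a := Real.sqrt_le_sqrt (by nlinarith)
    have hb0' : 0 ≤ b := Real.sqrt_nonneg _
    have hC2 : 0 ≤ (1/(n:ℝ)) * (α * a - β * b) := by
      have hm : β * b ≤ α * a := mul_le_mul hβα hba hb0' hα0.le
      have h1n : 0 ≤ 1/(n:ℝ) := by positivity
      nlinarith
    set tq : ℝ := 1 - (β/α)^2 with htq_def
    have htq0 : 0 ≤ tq := by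
      have hd1 : β/α ≤ 1 := (div_le_one hα0).mpr hβα
      have hd2 : 0 ≤ β/α := by positivity
      rw [htq_def]
      nlinarith
    have hden2 : 0 < (n:ℝ) - α^2 + (r - α)^2 * tq := by
      nlinarith [mul_nonneg (sq_nonneg (r - α)) htq0]
    have hQ : ((n:ℝ) - α^2) * r^2 * tq / ((n:ℝ) - α^2 + (r - α)^2 * tq) ≤ r^2 := by
      rw [div_le_iff₀ hden2]
      have htq1 : tq ≤ 1 := by rw [htq_def]; nlinarith [sq_nonneg (β/α)]
      have hh1 : 0 ≤ r^2 * ((n:ℝ) - α^2) * (1 - tq) :=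
        mul_nonneg (mul_nonneg (sq_nonneg r) (by linarith)) (by linarith)
      have hh2 : 0 ≤ r^2 * ((r - α)^2) * tq :=
        mul_nonneg (mul_nonneg (sq_nonneg r) (sq_nonneg _)) htq0
      nlinarith [hh1, hh2]
    have hsqrtQ : Real.sqrt (((n:ℝ) - α^2) * r^2 * tq
        / ((n:ℝ) - α^2 + (r - α)^2 * tq)) ≤ r := by
      calc Real.sqrt (((n:ℝ) - α^2) * r^2 * tq / ((n:ℝ) - α^2 + (r - α)^2 * tq))
          ≤ Real.sqrt (r^2) := Real.sqrt_le_sqrt hQ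
        _ = r := Real.sqrt_sq hr.le
    rw [ge_iff_le, gap_eq]
    calc Real.sqrt (((n:ℝ) - α^2) * r^2 * tq / ((n:ℝ) - α^2 + (r - α)^2 * tq))
          * ((1/(n:ℝ)) * (α * a - β * b)) * ‖sbar‖
        = Real.sqrt (((n:ℝ) - α^2) * r^2 * tq / ((n:ℝ) - α^2 + (r - α)^2 * tq))
          * ((1/(n:ℝ)) * (α * a - β * b) * ‖sbar‖) := by ring
      _ ≤ r * ((1/(n:ℝ)) * (α * a - β * b) * ‖sbar‖) :=
          mul_le_mul_of_nonneg_right hsqrtQ (mul_nonneg hC2 (norm_nonneg _))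
      _ = (1/(n:ℝ)) * (α * a - β * b) * (‖sbar‖ * r) := by ring
      _ ≤ ⟪sbar, xbar⟫ := hangle
end
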